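/- Let p : Ω → Λ be a connected covering of k-graphs, x a vertex of Λ, and v a vertex of Ω with p(v) = x. Then the automorphism group Aut(Ω,p) of the covering is isomorphic, as a group, to the quotient N(p_*π(Ω,v))/p_*π(Ω,v), where N(p_*π(Ω,v)) denotes the normalizer of the subgroup p_*π(Ω,v) in the fundamental group π(Λ,x). -/

import Mathlib

/-!
Arrows-only formalization of `k`-graphs (higher-rank graphs), their coverings,
fundamental groupoids, and groupoid actions, following Pask–Quigg–Raeburn,
"Coverings of k-graphs".

A small category is encoded by its set of arrows `A` together with
source/range maps `src rng : A → A` (whose common image is the set of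
identities = vertices) and a (guarded) total composition `comp : A → A → A`,
where `comp f g` is the composite "f after g", meaningful when `src f = rng g`.
A `k`-graph additionally has a degree map `deg : A → (Fin k → ℕ)` which is
functorial and satisfies the unique factorization property.
-/

namespace KGraphCovering

/-- A `k`-graph in arrows-only form. -/
structure KGraphStruct (k : ℕ) (A : Type) : Type where
  src : A → A
  rng : A → A
  comp : A → A → A
  deg : A → (Fin k → ℕ)
  src_src : ∀ f, src (src f) = src f
  rng_src : ∀ f, rng (src f) = src f
  src_rng : ∀ f, src (rng f) = rng f
  rng_rng : ∀ f, rng (rng f) = rng f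
  comp_src_id : ∀ f, comp f (src f) = f
  rng_comp_id : ∀ f, comp (rng f) f = f
  src_comp : ∀ f g, src f = rng g → src (comp f g) = src g
  rng_comp : ∀ f g, src f = rng g → rng (comp f g) = rng f
  assoc : ∀ f g h, src f = rng g → src g = rng h →
    comp (comp f g) h = comp f (comp g h)
  deg_comp : ∀ f g, src f = rng g → deg (comp f g) = deg f + deg g
  deg_src : ∀ f, deg (src f) = 0
  factor : ∀ f m n, deg f = m + n →
    ∃! q : A × A, src q.1 = rng q.2 ∧ deg q.1 = m ∧ deg q.2 = n ∧ comp q.1 q.2 = f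

namespace KGraphStruct

variable {k : ℕ} {A : Type}

/-- The vertices (objects) are the identity arrows. -/
def IsVertex (S : KGraphStruct k A) (v : A) : Prop := S.src v = v

/-- A `k`-graph is connected if the equivalence relation generated by
"there is a morphism from `v` to `u`" relates all pairs of vertices. -/
def Connected (S : KGraphStruct k A) : Prop :=
  ∀ u v, S.IsVertex u → S.IsVertex v →
    Relation.EqvGen (fun a b => ∃ f, S.rng f = a ∧ S.src f = b) u v

end KGraphStruct

/-- A groupoid in arrows-only form. -/
structure GroupoidStruct (B : Type) : Type where
  src : B → B
  rng : B → B
  comp : B → B → B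
  inv : B → B
  src_src : ∀ f, src (src f) = src f
  rng_src : ∀ f, rng (src f) = src f
  src_rng : ∀ f, src (rng f) = rng f
  rng_rng : ∀ f, rng (rng f) = rng f
  comp_src_id : ∀ f, comp f (src f) = f
  rng_comp_id : ∀ f, comp (rng f) f = f
  src_comp : ∀ f g, src f = rng g → src (comp f g) = src g
  rng_comp : ∀ f g, src f = rng g → rng (comp f g) = rng f
  assoc : ∀ f g h, src f = rng g → src g = rng h →
    comp (comp f g) h = comp f (comp g h)
  src_inv : ∀ f, src (inv f) = rng f
  rng_inv : ∀ f, rng (inv f) = src f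
  inv_comp_self : ∀ f, comp (inv f) f = src f
  comp_inv_self : ∀ f, comp f (inv f) = rng f

namespace GroupoidStruct

variable {B : Type}

/-- The vertices (objects) of a groupoid are the identity arrows. -/
def IsVertex (G : GroupoidStruct B) (v : B) : Prop := G.src v = v

/-- A subgroup of the isotropy group `x𝒢x`, as a set of arrows. -/
def IsSubgroupAt (G : GroupoidStruct B) (x : B) (H : Set B) : Prop :=
  (∀ a ∈ H, G.src a = x ∧ G.rng a = x) ∧ x ∈ H ∧
  (∀ a ∈ H, ∀ b ∈ H, G.comp a b ∈ H) ∧ (∀ a ∈ H, G.inv a ∈ H)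

/-- `K` is a conjugate of `H` in the isotropy group at `x`. -/
def ConjAt (G : GroupoidStruct B) (x : B) (H K : Set B) : Prop :=
  ∃ g, G.src g = x ∧ G.rng g = x ∧
    K = (fun a => G.comp (G.comp g a) (G.inv g)) '' H

/-- `H` is a normal subset of the isotropy group at `x`. -/
def IsNormalAt (G : GroupoidStruct B) (x : B) (H : Set B) : Prop :=
  ∀ g, G.src g = x → G.rng g = x → ∀ a ∈ H, G.comp (G.comp g a) (G.inv g) ∈ H

/-- The normalizer of `H` in the isotropy group at `x`. -/
def normalizerAt (G : GroupoidStruct B) (x : B) (H : Set B) : Set B :=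
  {g | G.src g = x ∧ G.rng g = x ∧
    (fun a => G.comp (G.comp g a) (G.inv g)) '' H = H}

end GroupoidStruct

/-- `f` is a morphism of `k`-graphs (a degree-preserving functor). -/
def IsKGraphHomFun {k : ℕ} {A A' : Type} (S : KGraphStruct k A)
    (T : KGraphStruct k A') (f : A → A') : Prop :=
  (∀ a, f (S.src a) = T.src (f a)) ∧
  (∀ a, f (S.rng a) = T.rng (f a)) ∧
  (∀ a b, S.src a = S.rng b → f (S.comp a b) = T.comp (f a) (f b)) ∧
  (∀ a, T.deg (f a) = S.deg a)

/-- `f` is a functor from a `k`-graph to a groupoid. -/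
def IsFunctorToGpdFun {k : ℕ} {A B : Type} (S : KGraphStruct k A)
    (G : GroupoidStruct B) (f : A → B) : Prop :=
  (∀ a, f (S.src a) = G.src (f a)) ∧
  (∀ a, f (S.rng a) = G.rng (f a)) ∧
  (∀ a b, S.src a = S.rng b → f (S.comp a b) = G.comp (f a) (f b))

/-- `f` is a morphism of groupoids (a functor). -/
def IsGpdHomFun {B C : Type} (G : GroupoidStruct B) (H : GroupoidStruct C)
    (f : B → C) : Prop :=
  (∀ a, f (G.src a) = H.src (f a)) ∧
  (∀ a, f (G.rng a) = H.rng (f a)) ∧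
  (∀ a b, G.src a = G.rng b → f (G.comp a b) = H.comp (f a) (f b))

/-- `p : Ω → Λ` is a covering of `k`-graphs: a surjective `k`-graph morphism
which maps `Ωv` bijectively onto `Λp(v)` and `vΩ` bijectively onto `p(v)Λ`
for every vertex `v` of `Ω`. -/
structure IsCovering {k : ℕ} {A A' : Type} (S : KGraphStruct k A')
    (T : KGraphStruct k A) (p : A' → A) : Prop where
  hom : IsKGraphHomFun S T p
  surj : Function.Surjective p
  src_inj : ∀ a b, S.src a = S.src b → p a = p b → a = b
  src_lift : ∀ v, S.IsVertex v → ∀ g, T.src g = p v → ∃ a, S.src a = v ∧ p a = g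
  rng_inj : ∀ a b, S.rng a = S.rng b → p a = p b → a = b
  rng_lift : ∀ v, S.IsVertex v → ∀ g, T.rng g = p v → ∃ a, S.rng a = v ∧ p a = g

/-- A fundamental groupoid of a `k`-graph `S`: a groupoid `G` whose object
set is identified with the vertex set of `S` via the canonical functor `i`
(which is bijective on objects), with the universal property that every
functor from `S` to a groupoid factors uniquely through `i`. -/
structure FundamentalGroupoid {k : ℕ} {A : Type} (S : KGraphStruct k A) :
    Type 1 where
  B : Type
  G : GroupoidStruct B
  i : A → B
  i_hom : IsFunctorToGpdFun S G i
  obj_bij : ∀ w, G.IsVertex w → ∃! v, S.IsVertex v ∧ i v = w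
  univ : ∀ {C : Type} (H : GroupoidStruct C) (F : A → C),
    IsFunctorToGpdFun S H F →
    ∃! F' : B → C, IsGpdHomFun G H F' ∧ ∀ a, F' (i a) = F a

/-- The fundamental group `π(Λ,x)` at a vertex `x`, as the isotropy of the
fundamental groupoid at `i x`. -/
def FundamentalGroupoid.pi1 {k : ℕ} {A : Type} {S : KGraphStruct k A}
    (F : FundamentalGroupoid S) (x : A) : Set F.B :=
  {a | F.G.src a = F.i x ∧ F.G.rng a = F.i x}

/-- An automorphism of the covering `p : Ω → Λ`. -/
def IsCoveringAut {k : ℕ} {A A' : Type} (Ω : KGraphStruct k A')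
    (Λ : KGraphStruct k A) (p : A' → A) (φ : A' → A') : Prop :=
  Function.Bijective φ ∧ IsKGraphHomFun Ω Ω φ ∧ ∀ a, p (φ a) = p a

/-- The action of the fundamental groupoid `F = 𝒢(Λ)` on the vertex set of a
covering `p : Ω → Λ`, determined by `i(p(λ)) ⬝ s(λ) = r(λ)`.  The fiber of a
vertex `w` of `Ω` is over the object `F.i (p w)`. -/
structure CorrespondingAction {k : ℕ} {A A' : Type} (Ω : KGraphStruct k A')
    (Λ : KGraphStruct k A) (F : FundamentalGroupoid Λ) (p : A' → A)
    (act : F.B → A' → A') : Prop where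
  act_vertex : ∀ a w, Ω.IsVertex w → F.G.src a = F.i (p w) →
    Ω.IsVertex (act a w) ∧ F.i (p (act a w)) = F.G.rng a
  act_id : ∀ w, Ω.IsVertex w → act (F.i (p w)) w = w
  act_comp : ∀ a b w, Ω.IsVertex w → F.G.src b = F.i (p w) →
    F.G.src a = F.G.rng b → act (F.G.comp a b) w = act a (act b w)
  act_cov : ∀ lam, act (F.i (p lam)) (Ω.src lam) = Ω.rng lam

/-- An action of a groupoid `G` on a set `V`, presented by an anchor map
`fib : V → B` (landing in vertices) and a guarded action map. -/
structure GpdActionStruct {B : Type} (G : GroupoidStruct B) (V : Type) :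
    Type where
  fib : V → B
  act : B → V → V
  fib_vertex : ∀ v, G.src (fib v) = fib v
  act_fib : ∀ a v, G.src a = fib v → fib (act a v) = G.rng a
  act_id : ∀ v, act (fib v) v = v
  act_comp : ∀ a b v, G.src b = fib v → G.src a = G.rng b →
    act (G.comp a b) v = act a (act b v)

namespace GpdActionStruct

variable {B V W : Type} {G : GroupoidStruct B}

/-- Transitivity of a groupoid action. -/
def Transitive (ρ : GpdActionStruct G V) : Prop :=
  ∀ u v : V, ∃ a, G.src a = ρ.fib v ∧ ρ.act a v = u

/-- The stability group of the action at `v`. -/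
def stab (ρ : GpdActionStruct G V) (v : V) : Set B :=
  {a | G.src a = ρ.fib v ∧ G.rng a = ρ.fib v ∧ ρ.act a v = v}

/-- Freeness of a groupoid action: all stability groups are trivial. -/
def Free (ρ : GpdActionStruct G V) : Prop :=
  ∀ (v : V) (a : B), a ∈ ρ.stab v → a = ρ.fib v

end GpdActionStruct

/-- A morphism of actions of the groupoid `G`: a fiber-preserving
equivariant map. -/
def IsActionHom {B V W : Type} {G : GroupoidStruct B}
    (ρ : GpdActionStruct G V) (σ : GpdActionStruct G W) (φ : V → W) : Prop :=
  (∀ v, σ.fib (φ v) = ρ.fib v) ∧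
  ∀ a v, G.src a = ρ.fib v → φ (ρ.act a v) = σ.act a (φ v)

/-- An automorphism of an action of the groupoid `G`. -/
def IsActionAut {B V : Type} {G : GroupoidStruct B}
    (ρ : GpdActionStruct G V) (φ : V → V) : Prop :=
  Function.Bijective φ ∧ IsActionHom ρ ρ φ

/-- A universal covering: a connected covering admitting a morphism of
coverings to every connected covering of the base. -/
def IsUniversalCovering {k : ℕ} {A A' : Type} (Ω : KGraphStruct k A')
    (Λ : KGraphStruct k A) (p : A' → A) : Prop :=
  IsCovering Ω Λ p ∧ Ω.Connected ∧
  ∀ (A'' : Type) (Sg : KGraphStruct k A'') (q : A'' → A),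
    IsCovering Sg Λ q → Sg.Connected →
    ∃ φ : A' → A'', IsKGraphHomFun Ω Sg φ ∧ ∀ a, q (φ a) = p a

end KGraphCovering

namespace KGraphCovering

/-! ### Auxiliary infrastructure for the proof -/

section BasicGroupoid

namespace GroupoidStruct

variable {B : Type} (G : GroupoidStruct B)

lemma vRng {v : B} (h : G.IsVertex v) : G.rng v = v := by
  have h2 := G.rng_src v
  rw [h] at h2
  exact h2

lemma inv_unique {x f : B} (h1 : G.src x = G.rng f) (h2 : G.comp x f = G.src f) :
    x = G.inv f := by
  calc x = G.comp x (G.src x) := (G.comp_src_id x).symm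
  _ = G.comp x (G.rng f) := by rw [h1]
  _ = G.comp x (G.comp f (G.inv f)) := by rw [G.comp_inv_self]
  _ = G.comp (G.comp x f) (G.inv f) := (G.assoc x f (G.inv f) h1 (G.rng_inv f).symm).symm
  _ = G.comp (G.src f) (G.inv f) := by rw [h2]
  _ = G.comp (G.rng (G.inv f)) (G.inv f) := by rw [G.rng_inv]
  _ = G.inv f := G.rng_comp_id _

lemma inv_inv (f : B) : G.inv (G.inv f) = f :=
  (G.inv_unique (G.rng_inv f).symm (by rw [G.comp_inv_self, G.src_inv])).symm

lemma vertex_inv {v : B} (h : G.IsVertex v) : G.inv v = v := by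
  refine (G.inv_unique ?_ ?_).symm
  · rw [h, G.vRng h]
  · have h3 := G.comp_src_id v
    rw [h] at h3
    rw [h3, h]

end GroupoidStruct

lemma hom_inv {B C : Type} {G : GroupoidStruct B} {H : GroupoidStruct C} {F : B → C}
    (hF : IsGpdHomFun G H F) (a : B) : F (G.inv a) = H.inv (F a) := by
  apply H.inv_unique
  · rw [← hF.1, ← hF.2.1, G.src_inv]
  · rw [← hF.2.2 _ _ (G.src_inv a), G.inv_comp_self, hF.1]

lemma hom_comp' {B C D : Type} {G : GroupoidStruct B} {H : GroupoidStruct C}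
    {K : GroupoidStruct D} {F : B → C} {F' : C → D}
    (hF : IsGpdHomFun G H F) (hF' : IsGpdHomFun H K F') :
    IsGpdHomFun G K (fun b => F' (F b)) := by
  refine ⟨fun a => ?_, fun a => ?_, fun a b h => ?_⟩
  · show F' (F (G.src a)) = K.src (F' (F a))
    rw [hF.1, hF'.1]
  · show F' (F (G.rng a)) = K.rng (F' (F a))
    rw [hF.2.1, hF'.2.1]
  · show F' (F (G.comp a b)) = K.comp (F' (F a)) (F' (F b))
    rw [hF.2.2 _ _ h, hF'.2.2 _ _ (by rw [← hF.1, ← hF.2.1, h])]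

lemma id_hom {B : Type} (G : GroupoidStruct B) : IsGpdHomFun G G (fun b => b) :=
  ⟨fun _ => rfl, fun _ => rfl, fun _ _ _ => rfl⟩

end BasicGroupoid

section FGHelpers

variable {k : ℕ} {A : Type} {S : KGraphStruct k A} (F : FundamentalGroupoid S)

lemma i_vertex {w : A} (h : S.IsVertex w) : F.G.IsVertex (F.i w) := by
  have := F.i_hom.1 w
  rw [h] at this
  unfold GroupoidStruct.IsVertex
  rw [← this]

lemma i_inj {u w : A} (hu : S.IsVertex u) (hw : S.IsVertex w) (h : F.i u = F.i w) :
    u = w := by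
  obtain ⟨y, -, hy⟩ := F.obj_bij (F.i u) (i_vertex F hu)
  have e1 := hy u ⟨hu, rfl⟩
  have e2 := hy w ⟨hw, h.symm⟩
  rw [e1, e2]

/-- Uniqueness of extensions along `i`. -/
lemma fg_ext {C : Type} (H : GroupoidStruct C) (f : A → C)
    (hf : IsFunctorToGpdFun S H f) {F1 F2 : F.B → C}
    (h1 : IsGpdHomFun F.G H F1) (c1 : ∀ a, F1 (F.i a) = f a)
    (h2 : IsGpdHomFun F.G H F2) (c2 : ∀ a, F2 (F.i a) = f a) : F1 = F2 := by
  obtain ⟨F0, -, hu⟩ := F.univ H f hf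
  rw [hu F1 ⟨h1, c1⟩, hu F2 ⟨h2, c2⟩]

end FGHelpers

section Generation

variable {B : Type}

/-- The subgroupoid generated by a set of arrows. -/
inductive GpdGen (G : GroupoidStruct B) (S : Set B) : B → Prop
  | of {a : B} : a ∈ S → GpdGen G S a
  | cmp {a b : B} : GpdGen G S a → GpdGen G S b → G.src a = G.rng b →
      GpdGen G S (G.comp a b)
  | inv {a : B} : GpdGen G S a → GpdGen G S (G.inv a)

lemma GpdGen.src' {G : GroupoidStruct B} {S : Set B} {a : B} (h : GpdGen G S a) :
    GpdGen G S (G.src a) := by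
  rw [← G.inv_comp_self a]
  exact .cmp (.inv h) h (G.src_inv a)

lemma GpdGen.rng' {G : GroupoidStruct B} {S : Set B} {a : B} (h : GpdGen G S a) :
    GpdGen G S (G.rng a) := by
  rw [← G.comp_inv_self a]
  exact .cmp h (.inv h) (G.rng_inv a).symm

open Classical in
/-- The generated subgroupoid as a groupoid in its own right. -/
noncomputable def genGpd (G : GroupoidStruct B) (S : Set B) :
    GroupoidStruct {c : B // GpdGen G S c} where
  src q := ⟨G.src q.1, q.2.src'⟩
  rng q := ⟨G.rng q.1, q.2.rng'⟩
  comp q q' := if h : G.src q.1 = G.rng q'.1 then ⟨G.comp q.1 q'.1, .cmp q.2 q'.2 h⟩ else q'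
  inv q := ⟨G.inv q.1, .inv q.2⟩
  src_src q := Subtype.ext (G.src_src q.1)
  rng_src q := Subtype.ext (G.rng_src q.1)
  src_rng q := Subtype.ext (G.src_rng q.1)
  rng_rng q := Subtype.ext (G.rng_rng q.1)
  comp_src_id q := by
    dsimp only
    rw [dif_pos (by rw [G.rng_src])]
    exact Subtype.ext (G.comp_src_id q.1)
  rng_comp_id q := by
    dsimp only
    rw [dif_pos (by rw [G.src_rng])]
    exact Subtype.ext (G.rng_comp_id q.1)
  src_comp q q' h := by
    have h1 : G.src q.1 = G.rng q'.1 := congrArg Subtype.val h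
    rw [dif_pos h1]
    exact Subtype.ext (G.src_comp _ _ h1)
  rng_comp q q' h := by
    have h1 : G.src q.1 = G.rng q'.1 := congrArg Subtype.val h
    rw [dif_pos h1]
    exact Subtype.ext (G.rng_comp _ _ h1)
  assoc f g h hfg hgh := by
    have h1 : G.src f.1 = G.rng g.1 := congrArg Subtype.val hfg
    have h2 : G.src g.1 = G.rng h.1 := congrArg Subtype.val hgh
    rw [dif_pos h1, dif_pos h2, dif_pos (by rw [G.src_comp _ _ h1]; exact h2),
      dif_pos (by rw [G.rng_comp _ _ h2]; exact h1)]
    exact Subtype.ext (G.assoc f.1 g.1 h.1 h1 h2)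
  src_inv q := Subtype.ext (G.src_inv q.1)
  rng_inv q := Subtype.ext (G.rng_inv q.1)
  inv_comp_self q := by
    dsimp only
    rw [dif_pos (G.src_inv q.1)]
    exact Subtype.ext (G.inv_comp_self q.1)
  comp_inv_self q := by
    dsimp only
    rw [dif_pos (G.rng_inv q.1).symm]
    exact Subtype.ext (G.comp_inv_self q.1)

/-- A fundamental groupoid is generated by the image of the canonical functor. -/
lemma fg_gen {k : ℕ} {A : Type} {S : KGraphStruct k A} (F : FundamentalGroupoid S)
    (c : F.B) : GpdGen F.G (Set.range F.i) c := by
  classical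
  have hiW : IsFunctorToGpdFun S (genGpd F.G (Set.range F.i))
      (fun a => ⟨F.i a, .of ⟨a, rfl⟩⟩) := by
    refine ⟨fun a => Subtype.ext (F.i_hom.1 a), fun a => Subtype.ext (F.i_hom.2.1 a),
      fun a b h => ?_⟩
    have h1 : F.G.src (F.i a) = F.G.rng (F.i b) := by
      rw [← F.i_hom.1, ← F.i_hom.2.1, h]
    show _ = dite _ _ _
    rw [dif_pos h1]
    exact Subtype.ext (F.i_hom.2.2 a b h)
  obtain ⟨F', ⟨hF'hom, hF'i⟩, -⟩ := F.univ (genGpd F.G (Set.range F.i)) _ hiW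
  have hval : IsGpdHomFun (genGpd F.G (Set.range F.i)) F.G Subtype.val := by
    refine ⟨fun a => rfl, fun a => rfl, fun a b h => ?_⟩
    have h1 : F.G.src a.1 = F.G.rng b.1 := congrArg Subtype.val h
    show Subtype.val (dite _ _ _) = _
    rw [dif_pos h1]
  have hid : (fun b => (F' b).1) = (fun b : F.B => b) := by
    refine fg_ext F F.G F.i F.i_hom ?_ (fun a => by rw [hF'i a]) (id_hom F.G) (fun a => rfl)
    exact hom_comp' hF'hom hval
  have := congrFun hid c
  rw [← this]
  exact (F' c).2

end Generation


section PermGpd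

variable {k : ℕ} {A A' : Type}

lemma KGraphStruct.vRng (S : KGraphStruct k A) {u : A} (h : S.IsVertex u) :
    S.rng u = u := by
  have h2 := S.rng_src u
  rw [h] at h2
  exact h2

variable {Λ : KGraphStruct k A} {Ω : KGraphStruct k A'} {p : A' → A}

lemma cov_vertex_p (hp : IsCovering Ω Λ p) {u : A'} (hu : Ω.IsVertex u) :
    Λ.IsVertex (p u) := by
  have h := hp.hom.1 u
  rw [hu] at h
  exact h.symm

/-- Canonical source-lift of an arrow of the base. -/
noncomputable def liftS (hp : IsCovering Ω Λ p) (g : A) (u : A')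
    (h : Ω.IsVertex u ∧ p u = Λ.src g) : A' :=
  (hp.src_lift u h.1 g h.2.symm).choose

lemma liftS_spec (hp : IsCovering Ω Λ p) (g : A) (u : A')
    (h : Ω.IsVertex u ∧ p u = Λ.src g) :
    Ω.src (liftS hp g u h) = u ∧ p (liftS hp g u h) = g :=
  (hp.src_lift u h.1 g h.2.symm).choose_spec

lemma liftS_unique (hp : IsCovering Ω Λ p) {g : A} {u μ : A'}
    (h : Ω.IsVertex u ∧ p u = Λ.src g) (h1 : Ω.src μ = u) (h2 : p μ = g) :
    μ = liftS hp g u h :=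
  hp.src_inj _ _ (by rw [h1, (liftS_spec hp g u h).1])
    (by rw [h2, (liftS_spec hp g u h).2])

/-- Canonical range-lift of an arrow of the base. -/
noncomputable def liftR (hp : IsCovering Ω Λ p) (g : A) (u : A')
    (h : Ω.IsVertex u ∧ p u = Λ.rng g) : A' :=
  (hp.rng_lift u h.1 g h.2.symm).choose

lemma liftR_spec (hp : IsCovering Ω Λ p) (g : A) (u : A')
    (h : Ω.IsVertex u ∧ p u = Λ.rng g) :
    Ω.rng (liftR hp g u h) = u ∧ p (liftR hp g u h) = g :=
  (hp.rng_lift u h.1 g h.2.symm).choose_spec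

lemma liftR_unique (hp : IsCovering Ω Λ p) {g : A} {u μ : A'}
    (h : Ω.IsVertex u ∧ p u = Λ.rng g) (h1 : Ω.rng μ = u) (h2 : p μ = g) :
    μ = liftR hp g u h :=
  hp.rng_inj _ _ (by rw [h1, (liftR_spec hp g u h).1])
    (by rw [h2, (liftR_spec hp g u h).2])

/-- An arrow of the permutation groupoid of the fibration `p⁰ : Ω⁰ → Λ⁰`. -/
structure PArrow (Ω : KGraphStruct k A') (p : A' → A) : Type where
  y : A
  z : A
  σ : A' → A'
  τ : A' → A'
  hσ : ∀ u, Ω.IsVertex u → p u = y → Ω.IsVertex (σ u) ∧ p (σ u) = z ∧ τ (σ u) = u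
  hσ' : ∀ u, ¬(Ω.IsVertex u ∧ p u = y) → σ u = u
  hτ : ∀ u, Ω.IsVertex u → p u = z → Ω.IsVertex (τ u) ∧ p (τ u) = y ∧ σ (τ u) = u
  hτ' : ∀ u, ¬(Ω.IsVertex u ∧ p u = z) → τ u = u

lemma PArrow.ext' {q q' : PArrow Ω p} (h1 : q.y = q'.y) (h2 : q.z = q'.z)
    (h3 : q.σ = q'.σ) (h4 : q.τ = q'.τ) : q = q' := by
  cases q; cases q'
  dsimp only at h1 h2 h3 h4
  subst h1; subst h2; subst h3; subst h4
  rfl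

/-- The identity arrow of the permutation groupoid at a vertex `y`. -/
def pVert (Ω : KGraphStruct k A') (p : A' → A) (y : A) : PArrow Ω p where
  y := y
  z := y
  σ := fun u => u
  τ := fun u => u
  hσ := fun u hu h => ⟨hu, h, rfl⟩
  hσ' := fun _ _ => rfl
  hτ := fun u hu h => ⟨hu, h, rfl⟩
  hτ' := fun _ _ => rfl

open Classical in
/-- The permutation groupoid of the fibration `p⁰ : Ω⁰ → Λ⁰`. -/
noncomputable def permGpd (Ω : KGraphStruct k A') (p : A' → A) :
    GroupoidStruct (PArrow Ω p) where
  src q := pVert Ω p q.y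
  rng q := pVert Ω p q.z
  comp q q' := if h : q.y = q'.z then
    { y := q'.y
      z := q.z
      σ := fun u => if Ω.IsVertex u ∧ p u = q'.y then q.σ (q'.σ u) else u
      τ := fun u => if Ω.IsVertex u ∧ p u = q.z then q'.τ (q.τ u) else u
      hσ := by
        intro u hu hpu
        have s1 := q'.hσ u hu hpu
        have s2 := q.hσ (q'.σ u) s1.1 (by rw [s1.2.1, ← h])
        rw [if_pos ⟨hu, hpu⟩]
        refine ⟨s2.1, s2.2.1, ?_⟩
        rw [if_pos ⟨s2.1, s2.2.1⟩, s2.2.2, s1.2.2]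
      hσ' := fun u hu => if_neg hu
      hτ := by
        intro u hu hpu
        have t1 := q.hτ u hu hpu
        have t2 := q'.hτ (q.τ u) t1.1 (by rw [t1.2.1]; exact h)
        rw [if_pos ⟨hu, hpu⟩]
        refine ⟨t2.1, t2.2.1, ?_⟩
        rw [if_pos ⟨t2.1, t2.2.1⟩, t2.2.2, t1.2.2]
      hτ' := fun u hu => if_neg hu }
    else q'
  inv q := ⟨q.z, q.y, q.τ, q.σ, q.hτ, q.hτ', q.hσ, q.hσ'⟩
  src_src _ := rfl
  rng_src _ := rfl
  src_rng _ := rfl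
  rng_rng _ := rfl
  comp_src_id q := by
    dsimp only [pVert]
    refine (dif_pos rfl).trans ?_
    refine PArrow.ext' rfl rfl (funext fun u => ?_) (funext fun u => ?_)
    · dsimp only [pVert]
      by_cases hc : Ω.IsVertex u ∧ p u = q.y
      · exact if_pos hc
      · exact (if_neg hc).trans (q.hσ' u hc).symm
    · dsimp only [pVert]
      by_cases hc : Ω.IsVertex u ∧ p u = q.z
      · rw [if_pos hc]
      · rw [if_neg hc, q.hτ' u hc]
  rng_comp_id q := by
    dsimp only [pVert]
    refine (dif_pos rfl).trans ?_
    refine PArrow.ext' rfl rfl (funext fun u => ?_) (funext fun u => ?_)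
    · dsimp only [pVert]
      by_cases hc : Ω.IsVertex u ∧ p u = q.y
      · rw [if_pos hc]
      · rw [if_neg hc, q.hσ' u hc]
    · dsimp only [pVert]
      by_cases hc : Ω.IsVertex u ∧ p u = q.z
      · exact if_pos hc
      · exact (if_neg hc).trans (q.hτ' u hc).symm
  src_comp q q' h := by
    have h1 : q.y = q'.z := congrArg PArrow.y h
    rw [dif_pos h1]
  rng_comp q q' h := by
    have h1 : q.y = q'.z := congrArg PArrow.y h
    rw [dif_pos h1]
  assoc f g h hfg hgh := by
    have h1 : f.y = g.z := congrArg PArrow.y hfg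
    have h2 : g.y = h.z := congrArg PArrow.y hgh
    rw [dif_pos h1, dif_pos h2, dif_pos h2, dif_pos h1]
    refine PArrow.ext' rfl rfl (funext fun u => ?_) (funext fun u => ?_)
    · dsimp only
      by_cases hc : Ω.IsVertex u ∧ p u = h.y
      · have s1 := h.hσ u hc.1 hc.2
        have hx : Ω.IsVertex (h.σ u) ∧ p (h.σ u) = g.y := ⟨s1.1, by rw [s1.2.1, ← h2]⟩
        rw [if_pos hc, if_pos hx, if_pos hc, if_pos hc]
      · rw [if_neg hc, if_neg hc]
    · dsimp only
      by_cases hc : Ω.IsVertex u ∧ p u = f.z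
      · have t1 := f.hτ u hc.1 hc.2
        have hx : Ω.IsVertex (f.τ u) ∧ p (f.τ u) = g.z := ⟨t1.1, by rw [t1.2.1]; exact h1⟩
        rw [if_pos hc, if_pos hc, if_pos hc, if_pos hx]
      · rw [if_neg hc, if_neg hc]
  src_inv _ := rfl
  rng_inv _ := rfl
  inv_comp_self q := by
    dsimp only [pVert]
    rw [dif_pos rfl]
    refine PArrow.ext' rfl rfl (funext fun u => ?_) (funext fun u => ?_)
    · dsimp only [pVert]
      by_cases hc : Ω.IsVertex u ∧ p u = q.y
      · rw [if_pos hc, (q.hσ u hc.1 hc.2).2.2]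
      · rw [if_neg hc]
    · dsimp only [pVert]
      by_cases hc : Ω.IsVertex u ∧ p u = q.y
      · rw [if_pos hc, (q.hσ u hc.1 hc.2).2.2]
      · rw [if_neg hc]
  comp_inv_self q := by
    dsimp only [pVert]
    rw [dif_pos rfl]
    refine PArrow.ext' rfl rfl (funext fun u => ?_) (funext fun u => ?_)
    · dsimp only [pVert]
      by_cases hc : Ω.IsVertex u ∧ p u = q.z
      · rw [if_pos hc, (q.hτ u hc.1 hc.2).2.2]
      · rw [if_neg hc]
    · dsimp only [pVert]
      by_cases hc : Ω.IsVertex u ∧ p u = q.z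
      · rw [if_pos hc, (q.hτ u hc.1 hc.2).2.2]
      · rw [if_neg hc]

open Classical in
/-- The canonical functor from the base `k`-graph into the permutation
groupoid, given by unique path lifting. -/
noncomputable def kP (hp : IsCovering Ω Λ p) (lam : A) : PArrow Ω p where
  y := Λ.src lam
  z := Λ.rng lam
  σ := fun u => if h : Ω.IsVertex u ∧ p u = Λ.src lam then Ω.rng (liftS hp lam u h) else u
  τ := fun u => if h : Ω.IsVertex u ∧ p u = Λ.rng lam then Ω.src (liftR hp lam u h) else u
  hσ := by
    intro u hu hpu
    rw [dif_pos ⟨hu, hpu⟩]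
    have sp := liftS_spec hp lam u ⟨hu, hpu⟩
    have hv : Ω.IsVertex (Ω.rng (liftS hp lam u ⟨hu, hpu⟩)) := Ω.src_rng _
    have hpz : p (Ω.rng (liftS hp lam u ⟨hu, hpu⟩)) = Λ.rng lam := by
      rw [hp.hom.2.1, sp.2]
    refine ⟨hv, hpz, ?_⟩
    rw [dif_pos ⟨hv, hpz⟩]
    rw [← liftR_unique hp ⟨hv, hpz⟩ rfl sp.2, sp.1]
  hσ' := fun u hu => dif_neg hu
  hτ := by
    intro u hu hpu
    rw [dif_pos ⟨hu, hpu⟩]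
    have sp := liftR_spec hp lam u ⟨hu, hpu⟩
    have hv : Ω.IsVertex (Ω.src (liftR hp lam u ⟨hu, hpu⟩)) := Ω.src_src _
    have hpz : p (Ω.src (liftR hp lam u ⟨hu, hpu⟩)) = Λ.src lam := by
      rw [hp.hom.1, sp.2]
    refine ⟨hv, hpz, ?_⟩
    rw [dif_pos ⟨hv, hpz⟩]
    rw [← liftS_unique hp ⟨hv, hpz⟩ rfl sp.2, sp.1]
  hτ' := fun u hu => dif_neg hu

lemma kP_functor (hp : IsCovering Ω Λ p) :
    IsFunctorToGpdFun Λ (permGpd Ω p) (kP hp) := by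
  classical
  refine ⟨fun lam => ?_, fun lam => ?_, fun lam mu hg => ?_⟩
  · -- sources
    show kP hp (Λ.src lam) = pVert Ω p (kP hp lam).y
    refine PArrow.ext' (Λ.src_src lam) (Λ.rng_src lam) (funext fun u => ?_)
      (funext fun u => ?_)
    · dsimp only [kP, pVert]
      by_cases hc : Ω.IsVertex u ∧ p u = Λ.src (Λ.src lam)
      · rw [dif_pos hc,
          ← liftS_unique hp hc hc.1 (by rw [hc.2, Λ.src_src]), Ω.vRng hc.1]
      · rw [dif_neg hc]
    · dsimp only [kP, pVert]
      by_cases hc : Ω.IsVertex u ∧ p u = Λ.rng (Λ.src lam)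
      · rw [dif_pos hc,
          ← liftR_unique hp hc (Ω.vRng hc.1) (by rw [hc.2, Λ.rng_src]), hc.1]
      · rw [dif_neg hc]
  · -- ranges
    show kP hp (Λ.rng lam) = pVert Ω p (kP hp lam).z
    refine PArrow.ext' (Λ.src_rng lam) (Λ.rng_rng lam) (funext fun u => ?_)
      (funext fun u => ?_)
    · dsimp only [kP, pVert]
      by_cases hc : Ω.IsVertex u ∧ p u = Λ.src (Λ.rng lam)
      · rw [dif_pos hc,
          ← liftS_unique hp hc hc.1 (by rw [hc.2, Λ.src_rng]), Ω.vRng hc.1]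
      · rw [dif_neg hc]
    · dsimp only [kP, pVert]
      by_cases hc : Ω.IsVertex u ∧ p u = Λ.rng (Λ.rng lam)
      · rw [dif_pos hc,
          ← liftR_unique hp hc (Ω.vRng hc.1) (by rw [hc.2, Λ.rng_rng]), hc.1]
      · rw [dif_neg hc]
  · -- composition
    have h1 : (kP hp lam).y = (kP hp mu).z := hg
    show kP hp (Λ.comp lam mu) = (permGpd Ω p).comp (kP hp lam) (kP hp mu)
    dsimp only [permGpd]
    rw [dif_pos h1]
    refine PArrow.ext' (Λ.src_comp lam mu hg) (Λ.rng_comp lam mu hg)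
      (funext fun u => ?_) (funext fun u => ?_)
    · dsimp only [kP]
      by_cases hc : Ω.IsVertex u ∧ p u = Λ.src mu
      · have hc0 : Ω.IsVertex u ∧ p u = Λ.src (Λ.comp lam mu) := by
          rw [Λ.src_comp lam mu hg]; exact hc
        have sp := liftS_spec hp mu u hc
        have hv1 : Ω.IsVertex (Ω.rng (liftS hp mu u hc)) := Ω.src_rng _
        have hpz1 : p (Ω.rng (liftS hp mu u hc)) = Λ.src lam := by
          rw [hp.hom.2.1, sp.2, hg]
        have sp2 := liftS_spec hp lam _ ⟨hv1, hpz1⟩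
        have hguard : Ω.src (liftS hp lam _ ⟨hv1, hpz1⟩) = Ω.rng (liftS hp mu u hc) :=
          sp2.1
        have key : liftS hp (Λ.comp lam mu) u hc0 =
            Ω.comp (liftS hp lam _ ⟨hv1, hpz1⟩) (liftS hp mu u hc) := by
          refine (liftS_unique hp hc0 ?_ ?_).symm
          · rw [Ω.src_comp _ _ hguard, sp.1]
          · rw [hp.hom.2.2.1 _ _ hguard, sp2.2, sp.2]
        rw [dif_pos hc0, dif_pos hc, dif_pos ⟨hv1, hpz1⟩, key,
          Ω.rng_comp _ _ hguard]
        exact (if_pos hc).symm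
      · have hc0 : ¬(Ω.IsVertex u ∧ p u = Λ.src (Λ.comp lam mu)) := by
          rw [Λ.src_comp lam mu hg]; exact hc
        rw [dif_neg hc0]
        exact (if_neg hc).symm
    · dsimp only [kP]
      by_cases hc : Ω.IsVertex u ∧ p u = Λ.rng lam
      · have hc0 : Ω.IsVertex u ∧ p u = Λ.rng (Λ.comp lam mu) := by
          rw [Λ.rng_comp lam mu hg]; exact hc
        have sp := liftR_spec hp lam u hc
        have hv1 : Ω.IsVertex (Ω.src (liftR hp lam u hc)) := Ω.src_src _
        have hpz1 : p (Ω.src (liftR hp lam u hc)) = Λ.rng mu := by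
          rw [hp.hom.1, sp.2, hg]
        have sp2 := liftR_spec hp mu _ ⟨hv1, hpz1⟩
        have hguard : Ω.src (liftR hp lam u hc) = Ω.rng (liftR hp mu _ ⟨hv1, hpz1⟩) :=
          sp2.1.symm
        have key : liftR hp (Λ.comp lam mu) u hc0 =
            Ω.comp (liftR hp lam u hc) (liftR hp mu _ ⟨hv1, hpz1⟩) := by
          refine (liftR_unique hp hc0 ?_ ?_).symm
          · rw [Ω.rng_comp _ _ hguard, sp.1]
          · rw [hp.hom.2.2.1 _ _ hguard, sp2.2, sp.2]
        rw [dif_pos hc0, dif_pos hc, dif_pos ⟨hv1, hpz1⟩, key,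
          Ω.src_comp _ _ hguard]
        exact (if_pos hc).symm
      · have hc0 : ¬(Ω.IsVertex u ∧ p u = Λ.rng (Λ.comp lam mu)) := by
          rw [Λ.rng_comp lam mu hg]; exact hc
        rw [dif_neg hc0]
        exact (if_neg hc).symm

end PermGpd


section ActionGroupoid

variable {k : ℕ} {A A' : Type} {Λ : KGraphStruct k A} {Ω : KGraphStruct k A'}

/-- The properties of the action of the fundamental groupoid of the base on
the vertices of the covering. -/
structure ActFacts (Ω : KGraphStruct k A') (FΛ : FundamentalGroupoid Λ)
    (p : A' → A) (act : FΛ.B → A' → A') : Prop where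
  vert : ∀ c u, Ω.IsVertex u → FΛ.G.src c = FΛ.i (p u) → Ω.IsVertex (act c u)
  fib : ∀ c u, Ω.IsVertex u → FΛ.G.src c = FΛ.i (p u) →
    FΛ.i (p (act c u)) = FΛ.G.rng c
  actid : ∀ u, Ω.IsVertex u → act (FΛ.i (p u)) u = u
  actcomp : ∀ c c' u, Ω.IsVertex u → FΛ.G.src c' = FΛ.i (p u) →
    FΛ.G.src c = FΛ.G.rng c' → act (FΛ.G.comp c c') u = act c (act c' u)
  actcov : ∀ a : A', act (FΛ.i (p a)) (Ω.src a) = Ω.rng a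

variable {FΛ : FundamentalGroupoid Λ} {p : A' → A} {act : FΛ.B → A' → A'}

lemma ActFacts.actinv1 (ha : ActFacts Ω FΛ p act) (c : FΛ.B) (u : A')
    (hu : Ω.IsVertex u) (hc : FΛ.G.src c = FΛ.i (p u)) :
    act (FΛ.G.inv c) (act c u) = u := by
  rw [← ha.actcomp (FΛ.G.inv c) c u hu hc (FΛ.G.src_inv c), FΛ.G.inv_comp_self, hc,
    ha.actid u hu]

lemma ActFacts.actinv2 (ha : ActFacts Ω FΛ p act) (c : FΛ.B) (u : A')
    (hu : Ω.IsVertex u) (hc : FΛ.G.rng c = FΛ.i (p u)) :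
    act c (act (FΛ.G.inv c) u) = u := by
  rw [← ha.actcomp c (FΛ.G.inv c) u hu (by rw [FΛ.G.src_inv]; exact hc)
    (FΛ.G.rng_inv c).symm, FΛ.G.comp_inv_self, hc, ha.actid u hu]

/-- Arrows of the action groupoid `𝒢(Λ) ⋉ Ω⁰`. -/
abbrev TArr (Ω : KGraphStruct k A') (FΛ : FundamentalGroupoid Λ) (p : A' → A) : Type :=
  {q : FΛ.B × A' // Ω.IsVertex q.2 ∧ FΛ.G.src q.1 = FΛ.i (p q.2)}

open Classical in
/-- The action groupoid `𝒢(Λ) ⋉ Ω⁰`. -/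
noncomputable def actGpd (ha : ActFacts Ω FΛ p act) : GroupoidStruct (TArr Ω FΛ p) where
  src q := ⟨(FΛ.G.src q.1.1, q.1.2), q.2.1, by rw [FΛ.G.src_src]; exact q.2.2⟩
  rng q := ⟨(FΛ.G.rng q.1.1, act q.1.1 q.1.2), ha.vert _ _ q.2.1 q.2.2,
    by rw [FΛ.G.src_rng, ha.fib _ _ q.2.1 q.2.2]⟩
  comp q q' := if h : FΛ.G.src q.1.1 = FΛ.G.rng q'.1.1 then
    ⟨(FΛ.G.comp q.1.1 q'.1.1, q'.1.2), q'.2.1,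
      by rw [FΛ.G.src_comp _ _ h]; exact q'.2.2⟩ else q'
  inv q := ⟨(FΛ.G.inv q.1.1, act q.1.1 q.1.2), ha.vert _ _ q.2.1 q.2.2,
    by rw [FΛ.G.src_inv, ha.fib _ _ q.2.1 q.2.2]⟩
  src_src q := Subtype.ext (Prod.ext (FΛ.G.src_src _) rfl)
  rng_src q := by
    refine Subtype.ext (Prod.ext (FΛ.G.rng_src _) ?_)
    show act (FΛ.G.src q.1.1) q.1.2 = q.1.2
    rw [q.2.2, ha.actid _ q.2.1]
  src_rng q := Subtype.ext (Prod.ext (FΛ.G.src_rng _) rfl)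
  rng_rng q := by
    refine Subtype.ext (Prod.ext (FΛ.G.rng_rng _) ?_)
    show act (FΛ.G.rng q.1.1) (act q.1.1 q.1.2) = act q.1.1 q.1.2
    rw [← ha.fib _ _ q.2.1 q.2.2, ha.actid _ (ha.vert _ _ q.2.1 q.2.2)]
  comp_src_id q := by
    dsimp only
    rw [dif_pos (FΛ.G.rng_src q.1.1).symm]
    exact Subtype.ext (Prod.ext (FΛ.G.comp_src_id _) rfl)
  rng_comp_id q := by
    dsimp only
    rw [dif_pos (FΛ.G.src_rng q.1.1)]
    exact Subtype.ext (Prod.ext (FΛ.G.rng_comp_id _) rfl)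
  src_comp q q' h := by
    have h1 : FΛ.G.src q.1.1 = FΛ.G.rng q'.1.1 := congrArg (fun r => r.1.1) h
    rw [dif_pos h1]
    exact Subtype.ext (Prod.ext (FΛ.G.src_comp _ _ h1) rfl)
  rng_comp q q' h := by
    have h1 : FΛ.G.src q.1.1 = FΛ.G.rng q'.1.1 := congrArg (fun r => r.1.1) h
    have h2 : q.1.2 = act q'.1.1 q'.1.2 := congrArg (fun r => r.1.2) h
    rw [dif_pos h1]
    refine Subtype.ext (Prod.ext (FΛ.G.rng_comp _ _ h1) ?_)
    show act (FΛ.G.comp q.1.1 q'.1.1) q'.1.2 = act q.1.1 q.1.2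
    rw [ha.actcomp _ _ _ q'.2.1 q'.2.2 h1, ← h2]
  assoc f g h hfg hgh := by
    have h1 : FΛ.G.src f.1.1 = FΛ.G.rng g.1.1 := congrArg (fun r => r.1.1) hfg
    have h2 : FΛ.G.src g.1.1 = FΛ.G.rng h.1.1 := congrArg (fun r => r.1.1) hgh
    rw [dif_pos h1, dif_pos h2, dif_pos (by rw [FΛ.G.src_comp _ _ h1]; exact h2),
      dif_pos (by rw [FΛ.G.rng_comp _ _ h2]; exact h1)]
    exact Subtype.ext (Prod.ext (FΛ.G.assoc _ _ _ h1 h2) rfl)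
  src_inv q := Subtype.ext (Prod.ext (FΛ.G.src_inv _) rfl)
  rng_inv q := by
    refine Subtype.ext (Prod.ext (FΛ.G.rng_inv _) ?_)
    exact ha.actinv1 _ _ q.2.1 q.2.2
  inv_comp_self q := by
    dsimp only
    rw [dif_pos (FΛ.G.src_inv q.1.1)]
    exact Subtype.ext (Prod.ext (FΛ.G.inv_comp_self _) rfl)
  comp_inv_self q := by
    dsimp only
    rw [dif_pos (FΛ.G.rng_inv q.1.1).symm]
    exact Subtype.ext (Prod.ext (FΛ.G.comp_inv_self _) rfl)

/-- The canonical functor `Ω → 𝒢(Λ) ⋉ Ω⁰`. -/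
def jT (FΛ : FundamentalGroupoid Λ) (hp : IsCovering Ω Λ p) (a : A') :
    TArr Ω FΛ p :=
  ⟨(FΛ.i (p a), Ω.src a), Ω.src_src a,
    by rw [← FΛ.i_hom.1 (p a), ← hp.hom.1 a]⟩

lemma jT_functor (hp : IsCovering Ω Λ p) (ha : ActFacts Ω FΛ p act) :
    IsFunctorToGpdFun Ω (actGpd ha) (jT FΛ hp) := by
  refine ⟨fun a => ?_, fun a => ?_, fun a b h => ?_⟩
  · refine Subtype.ext (Prod.ext ?_ ?_)
    · show FΛ.i (p (Ω.src a)) = FΛ.G.src (FΛ.i (p a))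
      rw [← FΛ.i_hom.1 (p a), ← hp.hom.1 a]
    · exact Ω.src_src a
  · refine Subtype.ext (Prod.ext ?_ ?_)
    · show FΛ.i (p (Ω.rng a)) = FΛ.G.rng (FΛ.i (p a))
      rw [← FΛ.i_hom.2.1 (p a), ← hp.hom.2.1 a]
    · show Ω.src (Ω.rng a) = act (FΛ.i (p a)) (Ω.src a)
      rw [Ω.src_rng, ha.actcov a]
  · have h1 : FΛ.G.src (FΛ.i (p a)) = FΛ.G.rng (FΛ.i (p b)) := by
      rw [← FΛ.i_hom.1, ← FΛ.i_hom.2.1, ← hp.hom.1, ← hp.hom.2.1, h]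
    have h1' : FΛ.G.src (jT FΛ hp a).1.1 = FΛ.G.rng (jT FΛ hp b).1.1 := h1
    show jT FΛ hp (Ω.comp a b) = (actGpd ha).comp (jT FΛ hp a) (jT FΛ hp b)
    dsimp only [actGpd]
    rw [dif_pos h1']
    refine Subtype.ext (Prod.ext ?_ ?_)
    · show FΛ.i (p (Ω.comp a b)) = FΛ.G.comp (FΛ.i (p a)) (FΛ.i (p b))
      rw [hp.hom.2.2.1 _ _ h,
        FΛ.i_hom.2.2 _ _ (by rw [← hp.hom.1, ← hp.hom.2.1, h])]
    · exact Ω.src_comp a b h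

/-- The key lifting identity: the image under `p₊` of an arrow of `𝒢(Ω)`
starting at a vertex `u` acts on `u` with result the endpoint of the arrow. -/
lemma act_jfact {FΩ : FundamentalGroupoid Ω} {pst : FΩ.B → FΛ.B}
    (hp : IsCovering Ω Λ p) (ha : ActFacts Ω FΛ p act)
    (hpst : IsGpdHomFun FΩ.G FΛ.G pst) (hpsti : ∀ a, pst (FΩ.i a) = FΛ.i (p a)) :
    ∀ b u, Ω.IsVertex u → FΩ.G.src b = FΩ.i u →
      FΩ.G.rng b = FΩ.i (act (pst b) u) := by
  classical
  obtain ⟨j', ⟨hj'hom, hj'i⟩, -⟩ := FΩ.univ (actGpd ha) (jT FΛ hp) (jT_functor hp ha)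
  have hpr1 : IsGpdHomFun (actGpd ha) FΛ.G (fun q => q.1.1) := by
    refine ⟨fun q => rfl, fun q => rfl, fun q q' h => ?_⟩
    have h1 : FΛ.G.src q.1.1 = FΛ.G.rng q'.1.1 := congrArg (fun r => r.1.1) h
    show ((actGpd ha).comp q q').1.1 = _
    dsimp only [actGpd]
    rw [dif_pos h1]
  have hFip : IsFunctorToGpdFun Ω FΛ.G (fun a => FΛ.i (p a)) := by
    refine ⟨fun a => ?_, fun a => ?_, fun a b h => ?_⟩
    · show FΛ.i (p (Ω.src a)) = FΛ.G.src (FΛ.i (p a))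
      rw [← FΛ.i_hom.1 (p a), ← hp.hom.1 a]
    · show FΛ.i (p (Ω.rng a)) = FΛ.G.rng (FΛ.i (p a))
      rw [← FΛ.i_hom.2.1 (p a), ← hp.hom.2.1 a]
    · show FΛ.i (p (Ω.comp a b)) = FΛ.G.comp (FΛ.i (p a)) (FΛ.i (p b))
      rw [hp.hom.2.2.1 _ _ h,
        FΛ.i_hom.2.2 _ _ (by rw [← hp.hom.1, ← hp.hom.2.1, h])]
  have hcomp : IsGpdHomFun FΩ.G FΛ.G (fun b => (j' b).1.1) :=
    hom_comp' (F := j') (F' := fun q => q.1.1) hj'hom hpr1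
  have hpq : pst = fun b => (j' b).1.1 := by
    refine fg_ext FΩ FΛ.G _ hFip hpst hpsti hcomp (fun a => ?_)
    show (j' (FΩ.i a)).1.1 = FΛ.i (p a)
    rw [hj'i a]
    rfl
  intro b u hu hb
  have e1 : jT FΛ hp u = (actGpd ha).src (j' b) := by
    rw [← hj'i u, ← hb, hj'hom.1 b]
  have hu2 : u = (j' b).1.2 := by
    have := congrArg (fun r => r.1.2) e1
    dsimp only [jT, actGpd] at this
    rw [hu] at this
    exact this
  have hrv : FΩ.G.IsVertex (FΩ.G.rng b) := FΩ.G.src_rng b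
  obtain ⟨w, ⟨hw1, hw2⟩, -⟩ := FΩ.obj_bij (FΩ.G.rng b) hrv
  have e2 : jT FΛ hp w = (actGpd ha).rng (j' b) := by
    rw [← hj'i w, hw2, hj'hom.2.1 b]
  have hw3 : w = act (j' b).1.1 (j' b).1.2 := by
    have := congrArg (fun r => r.1.2) e2
    dsimp only [jT, actGpd] at this
    rw [hw1] at this
    exact this
  rw [← hw2]
  congr 1
  rw [hw3, ← hu2, hpq]

end ActionGroupoid


section GenericLemmas

variable {k : ℕ} {A A' : Type} {Λ : KGraphStruct k A} {Ω : KGraphStruct k A'}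
variable {FΛ : FundamentalGroupoid Λ} {FΩ : FundamentalGroupoid Ω}
variable {p : A' → A} {act : FΛ.B → A' → A'} {pst : FΩ.B → FΛ.B}

lemma aut_vertex {φ : A' → A'} (hφhom : IsKGraphHomFun Ω Ω φ) {u : A'}
    (hu : Ω.IsVertex u) : Ω.IsVertex (φ u) := by
  have h := hφhom.1 u
  rw [hu] at h
  exact h.symm

/-- Star-surjectivity of `p₊ : 𝒢(Ω) → 𝒢(Λ)`. -/
lemma star_surj (hp : IsCovering Ω Λ p) (ha : ActFacts Ω FΛ p act)
    (hpst : IsGpdHomFun FΩ.G FΛ.G pst) (hpsti : ∀ a, pst (FΩ.i a) = FΛ.i (p a)) :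
    ∀ c u, Ω.IsVertex u → FΛ.G.src c = FΛ.i (p u) →
      ∃ b, FΩ.G.src b = FΩ.i u ∧ pst b = c := by
  have hjf := act_jfact hp ha hpst hpsti
  intro c
  induction fg_gen FΛ c with
  | of h =>
    obtain ⟨lam, rfl⟩ := h
    intro u hu hc
    have hsl : Λ.src lam = p u :=
      i_inj FΛ (Λ.src_src lam) (cov_vertex_p hp hu) (by rw [FΛ.i_hom.1]; exact hc)
    refine ⟨FΩ.i (liftS hp lam u ⟨hu, hsl.symm⟩), ?_, ?_⟩
    · rw [← FΩ.i_hom.1, (liftS_spec hp lam u ⟨hu, hsl.symm⟩).1]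
    · rw [hpsti, (liftS_spec hp lam u ⟨hu, hsl.symm⟩).2]
  | cmp hga hgb hg iha ihb =>
    intro u hu hc
    rename_i a b
    rw [FΛ.G.src_comp _ _ hg] at hc
    obtain ⟨β, hβ1, hβ2⟩ := ihb u hu hc
    have hrβ := hjf β u hu hβ1
    rw [hβ2] at hrβ
    have hvb : Ω.IsVertex (act b u) := ha.vert b u hu hc
    have hca : FΛ.G.src a = FΛ.i (p (act b u)) := by
      rw [hg]; exact (ha.fib b u hu hc).symm
    obtain ⟨α, hα1, hα2⟩ := iha (act b u) hvb hca
    have hguard : FΩ.G.src α = FΩ.G.rng β := by rw [hα1, hrβ]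
    refine ⟨FΩ.G.comp α β, ?_, ?_⟩
    · rw [FΩ.G.src_comp _ _ hguard, hβ1]
    · rw [hpst.2.2 _ _ hguard, hα2, hβ2]
  | inv hga ih =>
    intro u hu hc
    rename_i a
    rw [FΛ.G.src_inv] at hc
    have hvw : Ω.IsVertex (act (FΛ.G.inv a) u) :=
      ha.vert _ u hu (by rw [FΛ.G.src_inv]; exact hc)
    have hfw : FΛ.i (p (act (FΛ.G.inv a) u)) = FΛ.G.src a := by
      have h2 := ha.fib (FΛ.G.inv a) u hu (by rw [FΛ.G.src_inv]; exact hc)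
      rw [FΛ.G.rng_inv] at h2
      exact h2
    obtain ⟨α, hα1, hα2⟩ := ih (act (FΛ.G.inv a) u) hvw hfw.symm
    have hrα := hjf α _ hvw hα1
    rw [hα2] at hrα
    have hact : act a (act (FΛ.G.inv a) u) = u := ha.actinv2 a u hu hc
    refine ⟨FΩ.G.inv α, ?_, ?_⟩
    · rw [FΩ.G.src_inv, hrα, hact]
    · rw [hom_inv hpst, hα2]

/-- Equivariance of covering automorphisms for the fundamental-groupoid
action on vertices. -/
lemma deck_equivariant (hp : IsCovering Ω Λ p) (ha : ActFacts Ω FΛ p act)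
    {φ : A' → A'} (hφhom : IsKGraphHomFun Ω Ω φ) (hφp : ∀ a, p (φ a) = p a) :
    ∀ c u, Ω.IsVertex u → FΛ.G.src c = FΛ.i (p u) →
      φ (act c u) = act c (φ u) := by
  intro c
  induction fg_gen FΛ c with
  | of h =>
    obtain ⟨lam, rfl⟩ := h
    intro u hu hc
    have hsl : Λ.src lam = p u :=
      i_inj FΛ (Λ.src_src lam) (cov_vertex_p hp hu) (by rw [FΛ.i_hom.1]; exact hc)
    have sp := liftS_spec hp lam u ⟨hu, hsl.symm⟩
    have h1 := ha.actcov (liftS hp lam u ⟨hu, hsl.symm⟩)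
    rw [sp.1, sp.2] at h1
    have e1 : p (φ (liftS hp lam u ⟨hu, hsl.symm⟩)) = lam := by rw [hφp, sp.2]
    have e2 : Ω.src (φ (liftS hp lam u ⟨hu, hsl.symm⟩)) = φ u := by
      rw [← hφhom.1, sp.1]
    have h2 := ha.actcov (φ (liftS hp lam u ⟨hu, hsl.symm⟩))
    rw [e1, e2] at h2
    rw [h1, h2]
    exact hφhom.2.1 _
  | cmp hga hgb hg iha ihb =>
    intro u hu hc
    rename_i a b
    rw [FΛ.G.src_comp _ _ hg] at hc
    have hvb : Ω.IsVertex (act b u) := ha.vert b u hu hc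
    have hca : FΛ.G.src a = FΛ.i (p (act b u)) := by
      rw [hg]; exact (ha.fib b u hu hc).symm
    have hφu : Ω.IsVertex (φ u) := aut_vertex hφhom hu
    have hcφ : FΛ.G.src b = FΛ.i (p (φ u)) := by rw [hφp]; exact hc
    rw [ha.actcomp a b u hu hc hg, ha.actcomp a b (φ u) hφu hcφ hg,
      iha (act b u) hvb hca, ihb u hu hc]
  | inv hga ih =>
    intro u hu hc
    rename_i a
    rw [FΛ.G.src_inv] at hc
    have hvw : Ω.IsVertex (act (FΛ.G.inv a) u) :=
      ha.vert _ u hu (by rw [FΛ.G.src_inv]; exact hc)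
    have hfw : FΛ.i (p (act (FΛ.G.inv a) u)) = FΛ.G.src a := by
      have h2 := ha.fib (FΛ.G.inv a) u hu (by rw [FΛ.G.src_inv]; exact hc)
      rw [FΛ.G.rng_inv] at h2
      exact h2
    have hw : act a (act (FΛ.G.inv a) u) = u := ha.actinv2 a u hu hc
    have e1 := ih _ hvw hfw.symm
    rw [hw] at e1
    have hφw : Ω.IsVertex (φ (act (FΛ.G.inv a) u)) := aut_vertex hφhom hvw
    have hfφw : FΛ.G.src a = FΛ.i (p (φ (act (FΛ.G.inv a) u))) := by
      rw [hφp]; exact hfw.symm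
    rw [e1, ha.actinv1 a _ hφw hfφw]

/-- Transitivity of the action on vertices for a connected covering. -/
lemma act_trans (hp : IsCovering Ω Λ p) (ha : ActFacts Ω FΛ p act)
    (hconn : Ω.Connected) :
    ∀ u u', Ω.IsVertex u → Ω.IsVertex u' →
      ∃ c, FΛ.G.src c = FΛ.i (p u') ∧ FΛ.G.rng c = FΛ.i (p u) ∧ act c u' = u := by
  intro u u' hu hu'
  have h := hconn u u' hu hu'
  suffices H : ∀ a b : A',
      Relation.EqvGen (fun a b => ∃ f, Ω.rng f = a ∧ Ω.src f = b) a b →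
      (Ω.IsVertex a ↔ Ω.IsVertex b) ∧ (Ω.IsVertex a → Ω.IsVertex b →
        ∃ c, FΛ.G.src c = FΛ.i (p b) ∧ FΛ.G.rng c = FΛ.i (p a) ∧ act c b = a)
    by exact (H u u' h).2 hu hu'
  intro a b hab
  induction hab with
  | rel a b hr =>
    obtain ⟨f, hf1, hf2⟩ := hr
    constructor
    · exact iff_of_true (by rw [← hf1]; exact Ω.src_rng f)
        (by rw [← hf2]; exact Ω.src_src f)
    · intro _ _
      exact ⟨FΛ.i (p f), by rw [← hf2, ← FΛ.i_hom.1, ← hp.hom.1],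
        by rw [← hf1, ← FΛ.i_hom.2.1, ← hp.hom.2.1],
        by rw [← hf2, ha.actcov f, hf1]⟩
  | refl a =>
    refine ⟨Iff.rfl, fun hva _ => ⟨FΛ.i (p a), ?_, ?_, ha.actid a hva⟩⟩
    · rw [← FΛ.i_hom.1 (p a), show Λ.src (p a) = p a from cov_vertex_p hp hva]
    · exact FΛ.G.vRng (i_vertex FΛ (cov_vertex_p hp hva))
  | symm a b h ih =>
    refine ⟨ih.1.symm, fun hvb hva => ?_⟩
    obtain ⟨c, hc1, hc2, hc3⟩ := ih.2 hva hvb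
    refine ⟨FΛ.G.inv c, by rw [FΛ.G.src_inv, hc2], by rw [FΛ.G.rng_inv, hc1], ?_⟩
    rw [← hc3]
    exact ha.actinv1 c b hvb hc1
  | trans a b c h1 h2 ih1 ih2 =>
    refine ⟨ih1.1.trans ih2.1, fun hva hvc => ?_⟩
    have hvb : Ω.IsVertex b := ih1.1.mp hva
    obtain ⟨c1, hc11, hc12, hc13⟩ := ih1.2 hva hvb
    obtain ⟨c2, hc21, hc22, hc23⟩ := ih2.2 hvb hvc
    have hguard : FΛ.G.src c1 = FΛ.G.rng c2 := by rw [hc11, hc22]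
    refine ⟨FΛ.G.comp c1 c2, ?_, ?_, ?_⟩
    · rw [FΛ.G.src_comp _ _ hguard, hc21]
    · rw [FΛ.G.rng_comp _ _ hguard, hc12]
    · rw [ha.actcomp c1 c2 c hvc hc21 hguard, hc23, hc13]

end GenericLemmas


section Cancellation

namespace GroupoidStruct

variable {B : Type} (G : GroupoidStruct B)

lemma cancel_left {g a : B} (h : G.src g = G.rng a) :
    G.comp (G.inv g) (G.comp g a) = a := by
  rw [← G.assoc _ _ _ (G.src_inv g) h, G.inv_comp_self, h, G.rng_comp_id]

lemma cancel_left' {g a : B} (h : G.rng g = G.rng a) :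
    G.comp g (G.comp (G.inv g) a) = a := by
  rw [← G.assoc _ _ _ (G.rng_inv g).symm (by rw [G.src_inv]; exact h),
    G.comp_inv_self, h, G.rng_comp_id]

lemma cancel_right {a g : B} (h : G.src a = G.rng g) :
    G.comp (G.comp a g) (G.inv g) = a := by
  rw [G.assoc _ _ _ h (G.rng_inv g).symm, G.comp_inv_self, ← h, G.comp_src_id]

lemma cancel_right' {a g : B} (h : G.src a = G.src g) :
    G.comp (G.comp a (G.inv g)) g = a := by
  rw [G.assoc _ _ _ (by rw [G.rng_inv]; exact h) (G.src_inv g), G.inv_comp_self,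
    ← h, G.comp_src_id]

lemma inv_comp {c c' : B} (h : G.src c = G.rng c') :
    G.inv (G.comp c c') = G.comp (G.inv c') (G.inv c) := by
  refine (G.inv_unique ?_ ?_).symm
  · rw [G.src_comp _ _ (by rw [G.src_inv, G.rng_inv]; exact h.symm), G.src_inv,
      G.rng_comp _ _ h]
  · rw [G.assoc _ _ _ (by rw [G.src_inv, G.rng_inv]; exact h.symm)
      (by rw [G.src_inv, G.rng_comp _ _ h]),
      G.cancel_left h, G.inv_comp_self, G.src_comp _ _ h]

end GroupoidStruct

end Cancellation

section Deck

variable {k : ℕ} {A A' : Type} {Λ : KGraphStruct k A} {Ω : KGraphStruct k A'}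
variable {FΛ : FundamentalGroupoid Λ} {p : A' → A} {act : FΛ.B → A' → A'}
variable {x : A} {v : A'}

open Classical in
/-- The vertex map of the deck transformation attached to `c`. -/
noncomputable def Fc
    (htr : ∀ u, Ω.IsVertex u → ∃ c, FΛ.G.src c = FΛ.i x ∧
      FΛ.G.rng c = FΛ.i (p u) ∧ act c v = u)
    (c : FΛ.B) (u : A') : A' :=
  if h : Ω.IsVertex u then act (FΛ.G.comp (htr u h).choose c) v else u

open Classical in
/-- The deck transformation attached to `c`. -/
noncomputable def Theta
    (htr : ∀ u, Ω.IsVertex u → ∃ c, FΛ.G.src c = FΛ.i x ∧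
      FΛ.G.rng c = FΛ.i (p u) ∧ act c v = u)
    (p' : A' → A) (c : FΛ.B) (a : A') : A' :=
  if h : ∃ μ, Ω.src μ = Fc htr (FΛ.G.inv c) (Ω.src a) ∧ p' μ = p' a then h.choose
  else a

/-- Well-definedness of the deck transformation construction. -/
lemma deck_welldef {H : Set FΛ.B}
    (ha : ActFacts Ω FΛ p act) (hv : Ω.IsVertex v) (hpv : p v = x)
    (hH1 : ∀ a ∈ H, FΛ.G.src a = FΛ.i x ∧ FΛ.G.rng a = FΛ.i x ∧ act a v = v)
    (hH2 : ∀ a, FΛ.G.src a = FΛ.i x → FΛ.G.rng a = FΛ.i x → act a v = v → a ∈ H)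
    {c : FΛ.B} (hc : c ∈ FΛ.G.normalizerAt (FΛ.i x) H) {d d' : FΛ.B}
    (hd : FΛ.G.src d = FΛ.i x) (hd' : FΛ.G.src d' = FΛ.i x)
    (hdd : act d v = act d' v) :
    act (FΛ.G.comp d c) v = act (FΛ.G.comp d' c) v := by
  obtain ⟨hc1, hc2, hc3⟩ := hc
  have hxv : FΛ.i x = FΛ.i (p v) := by rw [hpv]
  -- the ranges of d and d' agree
  have hrd : FΛ.G.rng d = FΛ.G.rng d' := by
    rw [← ha.fib d v hv (by rw [hd, hxv]), ← ha.fib d' v hv (by rw [hd', hxv]), hdd]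
  -- e := d'⁻¹ d is in the stabilizer of v, hence in H
  have hguard : FΛ.G.src (FΛ.G.inv d') = FΛ.G.rng d := by
    rw [FΛ.G.src_inv, hrd]
  have he1 : FΛ.G.src (FΛ.G.comp (FΛ.G.inv d') d) = FΛ.i x := by
    rw [FΛ.G.src_comp _ _ hguard, hd]
  have he2 : FΛ.G.rng (FΛ.G.comp (FΛ.G.inv d') d) = FΛ.i x := by
    rw [FΛ.G.rng_comp _ _ hguard, FΛ.G.rng_inv, hd']
  have he3 : act (FΛ.G.comp (FΛ.G.inv d') d) v = v := by
    rw [ha.actcomp _ _ v hv (by rw [hd, hxv]) hguard, hdd]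
    exact ha.actinv1 d' v hv (by rw [hd', hxv])
  have heH : FΛ.G.comp (FΛ.G.inv d') d ∈ H := hH2 _ he1 he2 he3
  -- write e = c f c⁻¹ with f ∈ H
  have heH' := heH
  rw [← hc3] at heH'
  obtain ⟨f, hfH, hfe⟩ := heH'
  obtain ⟨hf1, hf2, hf3⟩ := hH1 f hfH
  -- e ∘ c = c ∘ f
  have claim1 : FΛ.G.comp (FΛ.G.comp (FΛ.G.inv d') d) c = FΛ.G.comp c f := by
    rw [← hfe]
    exact FΛ.G.cancel_right' (by rw [FΛ.G.src_comp _ _ (by rw [hc1, hf2]), hf1, hc1])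
  -- d = d' ∘ e
  have claim2 : FΛ.G.comp d' (FΛ.G.comp (FΛ.G.inv d') d) = d :=
    FΛ.G.cancel_left' hrd.symm
  calc act (FΛ.G.comp d c) v
      = act (FΛ.G.comp (FΛ.G.comp d' (FΛ.G.comp (FΛ.G.inv d') d)) c) v := by
        rw [claim2]
    _ = act (FΛ.G.comp d' (FΛ.G.comp (FΛ.G.comp (FΛ.G.inv d') d) c)) v := by
        rw [FΛ.G.assoc _ _ _ (by rw [hd', he2]) (by rw [he1, hc2])]
    _ = act d' (act (FΛ.G.comp (FΛ.G.comp (FΛ.G.inv d') d) c) v) := by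
        rw [ha.actcomp _ _ v hv
          (by rw [FΛ.G.src_comp _ _ (by rw [he1, hc2]), hc1, hxv])
          (by rw [FΛ.G.rng_comp _ _ (by rw [he1, hc2]), hd', he2])]
    _ = act d' (act (FΛ.G.comp c f) v) := by rw [claim1]
    _ = act d' (act c (act f v)) := by
        rw [ha.actcomp c f v hv (by rw [hf1, hxv]) (by rw [hc1, hf2])]
    _ = act d' (act c v) := by rw [hf3]
    _ = act (FΛ.G.comp d' c) v := by
        rw [ha.actcomp d' c v hv (by rw [hc1, hxv]) (by rw [hd', hc2])]

/-- Basic properties of the vertex map `Fc`. -/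
lemma Fc_spec (hp : IsCovering Ω Λ p) (ha : ActFacts Ω FΛ p act)
    (hv : Ω.IsVertex v) (hpv : p v = x)
    (htr : ∀ u, Ω.IsVertex u → ∃ c, FΛ.G.src c = FΛ.i x ∧
      FΛ.G.rng c = FΛ.i (p u) ∧ act c v = u)
    {c : FΛ.B} (hc1 : FΛ.G.src c = FΛ.i x) (hc2 : FΛ.G.rng c = FΛ.i x)
    {u : A'} (hu : Ω.IsVertex u) :
    Ω.IsVertex (Fc htr c u) ∧ FΛ.i (p (Fc htr c u)) = FΛ.i (p u) ∧
      p (Fc htr c u) = p u := by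
  have hxv : FΛ.i x = FΛ.i (p v) := by rw [hpv]
  obtain ⟨hca1, hca2, hca3⟩ := (htr u hu).choose_spec
  have hsg : FΛ.G.src (FΛ.G.comp (htr u hu).choose c) = FΛ.i (p v) := by
    rw [FΛ.G.src_comp _ _ (by rw [hca1, hc2]), hc1, hxv]
  have h1 : Fc htr c u = act (FΛ.G.comp (htr u hu).choose c) v := dif_pos hu
  have hvert : Ω.IsVertex (Fc htr c u) := by
    rw [h1]; exact ha.vert _ v hv hsg
  have hfib : FΛ.i (p (Fc htr c u)) = FΛ.i (p u) := by
    rw [h1, ha.fib _ v hv hsg, FΛ.G.rng_comp _ _ (by rw [hca1, hc2]), hca2]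
  refine ⟨hvert, hfib, ?_⟩
  exact i_inj FΛ (cov_vertex_p hp hvert) (cov_vertex_p hp hu) hfib

/-- `Fc` intertwines the action along arrows. -/
lemma Fc_step {H : Set FΛ.B}
    (ha : ActFacts Ω FΛ p act) (hv : Ω.IsVertex v) (hpv : p v = x)
    (htr : ∀ u, Ω.IsVertex u → ∃ c, FΛ.G.src c = FΛ.i x ∧
      FΛ.G.rng c = FΛ.i (p u) ∧ act c v = u)
    (hH1 : ∀ a ∈ H, FΛ.G.src a = FΛ.i x ∧ FΛ.G.rng a = FΛ.i x ∧ act a v = v)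
    (hH2 : ∀ a, FΛ.G.src a = FΛ.i x → FΛ.G.rng a = FΛ.i x → act a v = v → a ∈ H)
    {c : FΛ.B} (hc : c ∈ FΛ.G.normalizerAt (FΛ.i x) H) {d : FΛ.B} {u u' : A'}
    (hu : Ω.IsVertex u) (hu' : Ω.IsVertex u')
    (hd1 : FΛ.G.src d = FΛ.i (p u')) (hd2 : FΛ.G.rng d = FΛ.i (p u))
    (hd3 : act d u' = u) :
    act d (Fc htr c u') = Fc htr c u := by
  obtain ⟨hc1, hc2, hc3⟩ := hc
  have hxv : FΛ.i x = FΛ.i (p v) := by rw [hpv]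
  obtain ⟨ha1, ha2, ha3⟩ := (htr u' hu').choose_spec
  obtain ⟨hb1, hb2, hb3⟩ := (htr u hu).choose_spec
  unfold Fc
  rw [dif_pos hu', dif_pos hu]
  have hg1 : FΛ.G.src (FΛ.G.comp (htr u' hu').choose c) = FΛ.i (p v) := by
    rw [FΛ.G.src_comp _ _ (by rw [ha1, hc2]), hc1, hxv]
  have hg2 : FΛ.G.src d = FΛ.G.rng (FΛ.G.comp (htr u' hu').choose c) := by
    rw [FΛ.G.rng_comp _ _ (by rw [ha1, hc2]), ha2, hd1]
  calc act d (act (FΛ.G.comp (htr u' hu').choose c) v)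
      = act (FΛ.G.comp d (FΛ.G.comp (htr u' hu').choose c)) v := by
        rw [ha.actcomp _ _ v hv hg1 hg2]
    _ = act (FΛ.G.comp (FΛ.G.comp d (htr u' hu').choose) c) v := by
        rw [FΛ.G.assoc _ _ _ (by rw [hd1, ha2]) (by rw [ha1, hc2])]
    _ = act (FΛ.G.comp (htr u hu).choose c) v := by
        refine deck_welldef ha hv hpv hH1 hH2 ⟨hc1, hc2, hc3⟩ ?_ hb1 ?_
        · rw [FΛ.G.src_comp _ _ (by rw [hd1, ha2]), ha1]
        · rw [ha.actcomp d _ v hv (by rw [ha1, hxv]) (by rw [hd1, ha2]), ha3,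
            hd3, hb3]

/-- Defining property of `Theta`. -/
lemma Theta_spec (hp : IsCovering Ω Λ p) (ha : ActFacts Ω FΛ p act)
    (hv : Ω.IsVertex v) (hpv : p v = x)
    (htr : ∀ u, Ω.IsVertex u → ∃ c, FΛ.G.src c = FΛ.i x ∧
      FΛ.G.rng c = FΛ.i (p u) ∧ act c v = u)
    {c : FΛ.B} (hc1 : FΛ.G.src c = FΛ.i x) (hc2 : FΛ.G.rng c = FΛ.i x)
    (a : A') :
    Ω.src (Theta htr p c a) = Fc htr (FΛ.G.inv c) (Ω.src a) ∧
      p (Theta htr p c a) = p a := by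
  have hi1 : FΛ.G.src (FΛ.G.inv c) = FΛ.i x := by rw [FΛ.G.src_inv, hc2]
  have hi2 : FΛ.G.rng (FΛ.G.inv c) = FΛ.i x := by rw [FΛ.G.rng_inv, hc1]
  have hsv : Ω.IsVertex (Ω.src a) := Ω.src_src a
  have hFv := Fc_spec hp ha hv hpv htr hi1 hi2 hsv
  have hEx : ∃ μ, Ω.src μ = Fc htr (FΛ.G.inv c) (Ω.src a) ∧ p μ = p a := by
    obtain ⟨μ, hμ1, hμ2⟩ := hp.src_lift _ hFv.1 (p a) (by rw [hFv.2.2, hp.hom.1])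
    exact ⟨μ, hμ1, hμ2⟩
  have h1 : Theta htr p c a = hEx.choose := dif_pos hEx
  rw [h1]
  exact hEx.choose_spec

end Deck


namespace GroupoidStruct
section NormAlg

variable {B : Type} (G : GroupoidStruct B) {e : B} {H : Set B} {c c' a : B}

lemma conj_mem (hc : c ∈ G.normalizerAt e H) (haH : a ∈ H) :
    G.comp (G.comp c a) (G.inv c) ∈ H := by
  rw [← hc.2.2]
  exact ⟨a, haH, rfl⟩

lemma conj_conj_inv {b : B} (hc1 : G.src c = e) (hb1 : G.src b = e)
    (hrb : G.rng b = e) :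
    G.comp (G.comp (G.inv c) (G.comp (G.comp c b) (G.inv c))) (G.inv (G.inv c)) = b := by
  rw [G.inv_inv]
  have hg : G.src c = G.rng b := by rw [hc1, hrb]
  rw [← G.assoc (G.inv c) (G.comp c b) (G.inv c)
    (by rw [G.src_inv, G.rng_comp _ _ hg]) (by rw [G.src_comp _ _ hg, G.rng_inv, hb1, hc1])]
  rw [G.cancel_left hg]
  exact G.cancel_right' (by rw [hb1, hc1])

lemma conj_inv_mem (hH1 : ∀ a ∈ H, G.src a = e ∧ G.rng a = e)
    (hc : c ∈ G.normalizerAt e H) (haH : a ∈ H) :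
    G.comp (G.comp (G.inv c) a) (G.inv (G.inv c)) ∈ H := by
  have haH' := haH
  rw [← hc.2.2] at haH'
  obtain ⟨b, hbH, hba⟩ := haH'
  dsimp only at hba
  rw [← hba, G.conj_conj_inv hc.1 (hH1 b hbH).1 (hH1 b hbH).2]
  exact hbH

lemma normalizer_inv (hH1 : ∀ a ∈ H, G.src a = e ∧ G.rng a = e)
    (hc : c ∈ G.normalizerAt e H) : G.inv c ∈ G.normalizerAt e H := by
  refine ⟨by rw [G.src_inv, hc.2.1], by rw [G.rng_inv, hc.1], ?_⟩
  refine Set.Subset.antisymm ?_ ?_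
  · rintro _ ⟨a, haH, rfl⟩
    exact G.conj_inv_mem hH1 hc haH
  · intro a haH
    refine ⟨G.comp (G.comp c a) (G.inv c), G.conj_mem hc haH, ?_⟩
    exact G.conj_conj_inv hc.1 (hH1 a haH).1 (hH1 a haH).2

lemma conj_comp_eq (hc1 : G.src c = e) (hc2 : G.rng c = e) (hc1' : G.src c' = e)
    (hc2' : G.rng c' = e) (ha1 : G.src a = e) (ha2 : G.rng a = e) :
    G.comp (G.comp (G.comp c c') a) (G.inv (G.comp c c')) =
      G.comp (G.comp c (G.comp (G.comp c' a) (G.inv c'))) (G.inv c) := by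
  have hg : G.src c = G.rng c' := by rw [hc1, hc2']
  have hga : G.src (G.comp c c') = G.rng a := by rw [G.src_comp _ _ hg, hc1', ha2]
  have hg2 : G.src c' = G.rng a := by rw [hc1', ha2]
  rw [G.inv_comp hg]
  rw [← G.assoc (G.comp (G.comp c c') a) (G.inv c') (G.inv c)
    (by rw [G.src_comp _ _ hga, ha1, G.rng_inv, hc1'])
    (by rw [G.src_inv, G.rng_inv, hc2', hc1])]
  rw [G.assoc c c' a hg hg2]
  rw [G.assoc c (G.comp c' a) (G.inv c')
    (by rw [G.rng_comp _ _ hg2, hc1, hc2'])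
    (by rw [G.src_comp _ _ hg2, ha1, G.rng_inv, hc1'])]

lemma normalizer_comp (hH1 : ∀ a ∈ H, G.src a = e ∧ G.rng a = e)
    (hc : c ∈ G.normalizerAt e H) (hc' : c' ∈ G.normalizerAt e H) :
    G.comp c c' ∈ G.normalizerAt e H := by
  have hg : G.src c = G.rng c' := by rw [hc.1, hc'.2.1]
  refine ⟨by rw [G.src_comp _ _ hg, hc'.1], by rw [G.rng_comp _ _ hg, hc.2.1], ?_⟩
  refine Set.Subset.antisymm ?_ ?_
  · rintro _ ⟨a, haH, rfl⟩
    dsimp only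
    rw [G.conj_comp_eq hc.1 hc.2.1 hc'.1 hc'.2.1 (hH1 a haH).1 (hH1 a haH).2]
    exact G.conj_mem hc (G.conj_mem hc' haH)
  · intro a haH
    have haH' := haH
    rw [← hc.2.2] at haH'
    obtain ⟨b, hbH, hba⟩ := haH'
    dsimp only at hba
    have hbH' := hbH
    rw [← hc'.2.2] at hbH'
    obtain ⟨b', hb'H, hb'b⟩ := hbH'
    dsimp only at hb'b
    refine ⟨b', hb'H, ?_⟩
    dsimp only
    rw [G.conj_comp_eq hc.1 hc.2.1 hc'.1 hc'.2.1 (hH1 b' hb'H).1 (hH1 b' hb'H).2,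
      hb'b, hba]

lemma normalizer_one (hH1 : ∀ a ∈ H, G.src a = e ∧ G.rng a = e)
    (he : G.IsVertex e) : e ∈ G.normalizerAt e H := by
  have hkey : ∀ a ∈ H, G.comp (G.comp e a) (G.inv e) = a := by
    intro a haH
    rw [G.vertex_inv he, ← (hH1 a haH).2, G.rng_comp_id, (hH1 a haH).2,
      ← (hH1 a haH).1, G.comp_src_id]
  refine ⟨he, G.vRng he, Set.Subset.antisymm ?_ ?_⟩
  · rintro _ ⟨a, haH, rfl⟩
    dsimp only
    rw [hkey a haH]
    exact haH
  · intro a haH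
    exact ⟨a, haH, hkey a haH⟩

end NormAlg
end GroupoidStruct


section Deck2

variable {k : ℕ} {A A' : Type} {Λ : KGraphStruct k A} {Ω : KGraphStruct k A'}
variable {FΛ : FundamentalGroupoid Λ} {p : A' → A} {act : FΛ.B → A' → A'}
variable {x : A} {v : A'} {H : Set FΛ.B}

/-- Ranges under `Theta`. -/
lemma Theta_rng (hp : IsCovering Ω Λ p) (ha : ActFacts Ω FΛ p act)
    (hv : Ω.IsVertex v) (hpv : p v = x)
    (htr : ∀ u, Ω.IsVertex u → ∃ c, FΛ.G.src c = FΛ.i x ∧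
      FΛ.G.rng c = FΛ.i (p u) ∧ act c v = u)
    (hH1 : ∀ a ∈ H, FΛ.G.src a = FΛ.i x ∧ FΛ.G.rng a = FΛ.i x ∧ act a v = v)
    (hH2 : ∀ a, FΛ.G.src a = FΛ.i x → FΛ.G.rng a = FΛ.i x → act a v = v → a ∈ H)
    {c : FΛ.B} (hc : c ∈ FΛ.G.normalizerAt (FΛ.i x) H) (a : A') :
    Ω.rng (Theta htr p c a) = Fc htr (FΛ.G.inv c) (Ω.rng a) := by
  have hci : FΛ.G.inv c ∈ FΛ.G.normalizerAt (FΛ.i x) H :=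
    FΛ.G.normalizer_inv (fun a haH => ⟨(hH1 a haH).1, (hH1 a haH).2.1⟩) hc
  have hsp := Theta_spec hp ha hv hpv htr hc.1 hc.2.1 a
  have h := ha.actcov (Theta htr p c a)
  rw [hsp.1, hsp.2] at h
  rw [← h]
  exact Fc_step ha hv hpv htr hH1 hH2 hci (Ω.src_rng a) (Ω.src_src a)
    (by rw [← FΛ.i_hom.1, ← hp.hom.1]) (by rw [← FΛ.i_hom.2.1, ← hp.hom.2.1])
    (ha.actcov a)

/-- `Theta` on vertices is `Fc`. -/
lemma Theta_vtx (hp : IsCovering Ω Λ p) (ha : ActFacts Ω FΛ p act)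
    (hv : Ω.IsVertex v) (hpv : p v = x)
    (htr : ∀ u, Ω.IsVertex u → ∃ c, FΛ.G.src c = FΛ.i x ∧
      FΛ.G.rng c = FΛ.i (p u) ∧ act c v = u)
    {c : FΛ.B} (hc1 : FΛ.G.src c = FΛ.i x) (hc2 : FΛ.G.rng c = FΛ.i x)
    {u : A'} (hu : Ω.IsVertex u) :
    Theta htr p c u = Fc htr (FΛ.G.inv c) u := by
  have hi1 : FΛ.G.src (FΛ.G.inv c) = FΛ.i x := by rw [FΛ.G.src_inv, hc2]
  have hi2 : FΛ.G.rng (FΛ.G.inv c) = FΛ.i x := by rw [FΛ.G.rng_inv, hc1]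
  have hsp := Theta_spec hp ha hv hpv htr hc1 hc2 u
  have hFv := Fc_spec hp ha hv hpv htr hi1 hi2 hu
  apply hp.src_inj
  · rw [hsp.1, show Ω.src u = u from hu]
    exact hFv.1.symm
  · rw [hsp.2]
    exact hFv.2.2.symm

/-- `Theta c` is a morphism of `k`-graphs. -/
lemma Theta_hom (hp : IsCovering Ω Λ p) (ha : ActFacts Ω FΛ p act)
    (hv : Ω.IsVertex v) (hpv : p v = x)
    (htr : ∀ u, Ω.IsVertex u → ∃ c, FΛ.G.src c = FΛ.i x ∧
      FΛ.G.rng c = FΛ.i (p u) ∧ act c v = u)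
    (hH1 : ∀ a ∈ H, FΛ.G.src a = FΛ.i x ∧ FΛ.G.rng a = FΛ.i x ∧ act a v = v)
    (hH2 : ∀ a, FΛ.G.src a = FΛ.i x → FΛ.G.rng a = FΛ.i x → act a v = v → a ∈ H)
    {c : FΛ.B} (hc : c ∈ FΛ.G.normalizerAt (FΛ.i x) H) :
    IsKGraphHomFun Ω Ω (Theta htr p c) := by
  obtain ⟨hc1, hc2, hc3⟩ := hc
  refine ⟨fun a => ?_, fun a => ?_, fun a b h => ?_, fun a => ?_⟩
  · rw [Theta_vtx hp ha hv hpv htr hc1 hc2 (Ω.src_src a)]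
    exact (Theta_spec hp ha hv hpv htr hc1 hc2 a).1.symm
  · rw [Theta_vtx hp ha hv hpv htr hc1 hc2 (Ω.src_rng a)]
    exact (Theta_rng hp ha hv hpv htr hH1 hH2 ⟨hc1, hc2, hc3⟩ a).symm
  · have hg : Ω.src (Theta htr p c a) = Ω.rng (Theta htr p c b) := by
      rw [(Theta_spec hp ha hv hpv htr hc1 hc2 a).1,
        Theta_rng hp ha hv hpv htr hH1 hH2 ⟨hc1, hc2, hc3⟩ b, h]
    apply hp.src_inj
    · rw [(Theta_spec hp ha hv hpv htr hc1 hc2 (Ω.comp a b)).1, Ω.src_comp _ _ h,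
        Ω.src_comp _ _ hg, (Theta_spec hp ha hv hpv htr hc1 hc2 b).1]
    · rw [(Theta_spec hp ha hv hpv htr hc1 hc2 (Ω.comp a b)).2,
        hp.hom.2.2.1 _ _ hg, hp.hom.2.2.1 _ _ h,
        (Theta_spec hp ha hv hpv htr hc1 hc2 a).2,
        (Theta_spec hp ha hv hpv htr hc1 hc2 b).2]
  · rw [← hp.hom.2.2.2 (Theta htr p c a),
      (Theta_spec hp ha hv hpv htr hc1 hc2 a).2, hp.hom.2.2.2 a]

/-- `Fc` at the base vertex. -/
lemma Fc_v (ha : ActFacts Ω FΛ p act) (hx : Λ.IsVertex x) (hv : Ω.IsVertex v)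
    (hpv : p v = x)
    (htr : ∀ u, Ω.IsVertex u → ∃ c, FΛ.G.src c = FΛ.i x ∧
      FΛ.G.rng c = FΛ.i (p u) ∧ act c v = u)
    (hH1 : ∀ a ∈ H, FΛ.G.src a = FΛ.i x ∧ FΛ.G.rng a = FΛ.i x ∧ act a v = v)
    (hH2 : ∀ a, FΛ.G.src a = FΛ.i x → FΛ.G.rng a = FΛ.i x → act a v = v → a ∈ H)
    {c : FΛ.B} (hc : c ∈ FΛ.G.normalizerAt (FΛ.i x) H) :
    Fc htr c v = act c v := by
  obtain ⟨hc1, hc2, hc3⟩ := hc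
  obtain ⟨ha1, ha2, ha3⟩ := (htr v hv).choose_spec
  have hex : FΛ.G.src (FΛ.i x) = FΛ.i x := i_vertex FΛ hx
  have hev : act (FΛ.i x) v = v := by
    have h := ha.actid v hv
    rw [hpv] at h
    exact h
  have hwd := deck_welldef ha hv hpv hH1 hH2 ⟨hc1, hc2, hc3⟩ ha1 hex
    (by rw [ha3, hev])
  unfold Fc
  rw [dif_pos hv, hwd, ← hc2, FΛ.G.rng_comp_id]

/-- Anti-multiplicativity of `Fc`. -/
lemma Fc_anti (hp : IsCovering Ω Λ p) (ha : ActFacts Ω FΛ p act)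
    (hv : Ω.IsVertex v) (hpv : p v = x)
    (htr : ∀ u, Ω.IsVertex u → ∃ c, FΛ.G.src c = FΛ.i x ∧
      FΛ.G.rng c = FΛ.i (p u) ∧ act c v = u)
    (hH1 : ∀ a ∈ H, FΛ.G.src a = FΛ.i x ∧ FΛ.G.rng a = FΛ.i x ∧ act a v = v)
    (hH2 : ∀ a, FΛ.G.src a = FΛ.i x → FΛ.G.rng a = FΛ.i x → act a v = v → a ∈ H)
    {c c' : FΛ.B} (hc : c ∈ FΛ.G.normalizerAt (FΛ.i x) H)
    (hc1' : FΛ.G.src c' = FΛ.i x) (hc2' : FΛ.G.rng c' = FΛ.i x)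
    {u : A'} (hu : Ω.IsVertex u) :
    Fc htr c (Fc htr c' u) = Fc htr (FΛ.G.comp c' c) u := by
  obtain ⟨hc1, hc2, hc3⟩ := hc
  have hFv := Fc_spec hp ha hv hpv htr hc1' hc2' hu
  obtain ⟨ha1, ha2, ha3⟩ := (htr u hu).choose_spec
  obtain ⟨hb1, hb2, hb3⟩ := (htr (Fc htr c' u) hFv.1).choose_spec
  have hwdef : Fc htr c' u = act (FΛ.G.comp (htr u hu).choose c') v := dif_pos hu
  have hd1 : FΛ.G.src (FΛ.G.comp (htr u hu).choose c') = FΛ.i x := by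
    rw [FΛ.G.src_comp _ _ (by rw [ha1, hc2']), hc1']
  have hwd := deck_welldef ha hv hpv hH1 hH2 ⟨hc1, hc2, hc3⟩ hd1 hb1
    (by rw [hb3, ← hwdef])
  have heq1 : Fc htr c (Fc htr c' u) =
      act (FΛ.G.comp (htr (Fc htr c' u) hFv.1).choose c) v := dif_pos hFv.1
  have heq2 : Fc htr (FΛ.G.comp c' c) u =
      act (FΛ.G.comp (htr u hu).choose (FΛ.G.comp c' c)) v := dif_pos hu
  rw [heq1, heq2, ← hwd,
    FΛ.G.assoc _ c' c (by rw [ha1, hc2']) (by rw [hc1', hc2])]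

/-- Multiplicativity of `Theta`. -/
lemma Theta_mul (hp : IsCovering Ω Λ p) (ha : ActFacts Ω FΛ p act)
    (hv : Ω.IsVertex v) (hpv : p v = x)
    (htr : ∀ u, Ω.IsVertex u → ∃ c, FΛ.G.src c = FΛ.i x ∧
      FΛ.G.rng c = FΛ.i (p u) ∧ act c v = u)
    (hH1 : ∀ a ∈ H, FΛ.G.src a = FΛ.i x ∧ FΛ.G.rng a = FΛ.i x ∧ act a v = v)
    (hH2 : ∀ a, FΛ.G.src a = FΛ.i x → FΛ.G.rng a = FΛ.i x → act a v = v → a ∈ H)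
    {c c' : FΛ.B} (hc : c ∈ FΛ.G.normalizerAt (FΛ.i x) H)
    (hc' : c' ∈ FΛ.G.normalizerAt (FΛ.i x) H) :
    Theta htr p (FΛ.G.comp c c') = Theta htr p c ∘ Theta htr p c' := by
  have hH1' : ∀ a ∈ H, FΛ.G.src a = FΛ.i x ∧ FΛ.G.rng a = FΛ.i x :=
    fun a haH => ⟨(hH1 a haH).1, (hH1 a haH).2.1⟩
  have hci : FΛ.G.inv c ∈ FΛ.G.normalizerAt (FΛ.i x) H := FΛ.G.normalizer_inv hH1' hc
  have hci' : FΛ.G.inv c' ∈ FΛ.G.normalizerAt (FΛ.i x) H := FΛ.G.normalizer_inv hH1' hc'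
  have hcc : FΛ.G.comp c c' ∈ FΛ.G.normalizerAt (FΛ.i x) H :=
    FΛ.G.normalizer_comp hH1' hc hc'
  funext a
  have hFkey : Fc htr (FΛ.G.inv (FΛ.G.comp c c')) (Ω.src a) =
      Fc htr (FΛ.G.inv c) (Fc htr (FΛ.G.inv c') (Ω.src a)) := by
    rw [Fc_anti hp ha hv hpv htr hH1 hH2 hci hci'.1 hci'.2.1 (Ω.src_src a),
      ← FΛ.G.inv_comp (by rw [hc.1, hc'.2.1])]
  have hsp1 := Theta_spec hp ha hv hpv htr hcc.1 hcc.2.1 a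
  have hsp2 := Theta_spec hp ha hv hpv htr hc'.1 hc'.2.1 a
  have hsp3 := Theta_spec hp ha hv hpv htr hc.1 hc.2.1 (Theta htr p c' a)
  apply hp.src_inj
  · rw [hsp1.1, hFkey]
    show _ = Ω.src (Theta htr p c (Theta htr p c' a))
    rw [hsp3.1, hsp2.1]
  · show p _ = p (Theta htr p c (Theta htr p c' a))
    rw [hsp1.2, hsp3.2, hsp2.2]

/-- `Theta` at the identity. -/
lemma Theta_id (hp : IsCovering Ω Λ p) (ha : ActFacts Ω FΛ p act)
    (hx : Λ.IsVertex x) (hv : Ω.IsVertex v) (hpv : p v = x)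
    (htr : ∀ u, Ω.IsVertex u → ∃ c, FΛ.G.src c = FΛ.i x ∧
      FΛ.G.rng c = FΛ.i (p u) ∧ act c v = u)
    (a : A') : Theta htr p (FΛ.i x) a = a := by
  have hex : FΛ.G.src (FΛ.i x) = FΛ.i x := i_vertex FΛ hx
  have hrx : FΛ.G.rng (FΛ.i x) = FΛ.i x := FΛ.G.vRng (i_vertex FΛ hx)
  have hFid : ∀ u, Ω.IsVertex u → Fc htr (FΛ.G.inv (FΛ.i x)) u = u := by
    intro u hu
    unfold Fc
    rw [dif_pos hu, FΛ.G.vertex_inv (i_vertex FΛ hx)]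
    set d := (htr u hu).choose with hdd
    obtain ⟨ha1, ha2, ha3⟩ := (htr u hu).choose_spec
    rw [← hdd] at ha1 ha3
    rw [← ha1, FΛ.G.comp_src_id, ha3]
  have hsp := Theta_spec hp ha hv hpv htr hex hrx a
  apply hp.src_inj
  · rw [hsp.1, hFid (Ω.src a) (Ω.src_src a)]
  · rw [hsp.2]

end Deck2


section DeckMain

variable {k : ℕ} {A A' : Type} {Λ : KGraphStruct k A} {Ω : KGraphStruct k A'}
variable {FΛ : FundamentalGroupoid Λ} {p : A' → A} {act : FΛ.B → A' → A'}
variable {x : A} {v : A'} {H : Set FΛ.B}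

/-- Assembly of the main theorem from the action data. -/
lemma deck_main (hp : IsCovering Ω Λ p) (ha : ActFacts Ω FΛ p act)
    (hx : Λ.IsVertex x) (hv : Ω.IsVertex v) (hpv : p v = x)
    (htr : ∀ u, Ω.IsVertex u → ∃ c, FΛ.G.src c = FΛ.i x ∧
      FΛ.G.rng c = FΛ.i (p u) ∧ act c v = u)
    (hH1 : ∀ a ∈ H, FΛ.G.src a = FΛ.i x ∧ FΛ.G.rng a = FΛ.i x ∧ act a v = v)
    (hH2 : ∀ a, FΛ.G.src a = FΛ.i x → FΛ.G.rng a = FΛ.i x → act a v = v → a ∈ H) :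
    ∃ Θ : FΛ.B → (A' → A'),
      (∀ c ∈ FΛ.G.normalizerAt (FΛ.i x) H, IsCoveringAut Ω Λ p (Θ c)) ∧
      (∀ φ, IsCoveringAut Ω Λ p φ →
        ∃ c ∈ FΛ.G.normalizerAt (FΛ.i x) H, Θ c = φ) ∧
      (∀ c ∈ FΛ.G.normalizerAt (FΛ.i x) H,
        ∀ c' ∈ FΛ.G.normalizerAt (FΛ.i x) H,
          Θ (FΛ.G.comp c c') = Θ c ∘ Θ c') ∧
      (∀ c ∈ FΛ.G.normalizerAt (FΛ.i x) H,
        ∀ c' ∈ FΛ.G.normalizerAt (FΛ.i x) H,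
          (Θ c = Θ c' ↔ FΛ.G.comp (FΛ.G.inv c) c' ∈ H)) := by
  have hH1' : ∀ a ∈ H, FΛ.G.src a = FΛ.i x ∧ FΛ.G.rng a = FΛ.i x :=
    fun a haH => ⟨(hH1 a haH).1, (hH1 a haH).2.1⟩
  have hxv : FΛ.i x = FΛ.i (p v) := by rw [hpv]
  refine ⟨Theta htr p, ?_, ?_, ?_, ?_⟩
  · -- covering automorphisms
    intro c hc
    have hci := FΛ.G.normalizer_inv hH1' hc
    have hmul1 := Theta_mul hp ha hv hpv htr hH1 hH2 hci hc
    have hmul2 := Theta_mul hp ha hv hpv htr hH1 hH2 hc hci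
    have hive : FΛ.G.comp (FΛ.G.inv c) c = FΛ.i x := by
      rw [FΛ.G.inv_comp_self, hc.1]
    have hive2 : FΛ.G.comp c (FΛ.G.inv c) = FΛ.i x := by
      rw [FΛ.G.comp_inv_self, hc.2.1]
    refine ⟨?_, Theta_hom hp ha hv hpv htr hH1 hH2 hc,
      fun a => (Theta_spec hp ha hv hpv htr hc.1 hc.2.1 a).2⟩
    refine Function.bijective_iff_has_inverse.mpr
      ⟨Theta htr p (FΛ.G.inv c), fun a => ?_, fun a => ?_⟩
    · have h := congrFun hmul1 a
      rw [hive, Theta_id hp ha hx hv hpv htr a] at h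
      exact h.symm
    · have h := congrFun hmul2 a
      rw [hive2, Theta_id hp ha hx hv hpv htr a] at h
      exact h.symm
  · -- surjectivity onto covering automorphisms
    intro φ hφ
    obtain ⟨hbij, hφhom, hφp⟩ := hφ
    have hφv : Ω.IsVertex (φ v) := aut_vertex hφhom hv
    obtain ⟨c0, hc01, hc02, hc03⟩ := htr (φ v) hφv
    have hc02' : FΛ.G.rng c0 = FΛ.i x := by rw [hc02, hφp, hpv]
    have hφx : FΛ.i x = FΛ.i (p (φ v)) := by rw [hφp, hpv]
    have hEq := deck_equivariant hp ha hφhom hφp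
    have hstab1 : ∀ a ∈ H, act a (φ v) = φ v := by
      intro a haH
      have h := hEq a v hv (by rw [(hH1 a haH).1, hxv])
      rw [(hH1 a haH).2.2] at h
      exact h.symm
    have hstab2 : ∀ a, FΛ.G.src a = FΛ.i x → FΛ.G.rng a = FΛ.i x →
        act a (φ v) = φ v → a ∈ H := by
      intro a h1 h2 h3
      refine hH2 a h1 h2 (hbij.1 ?_)
      rw [hEq a v hv (by rw [h1, hxv]), h3]
    have hinv0 : act (FΛ.G.inv c0) (φ v) = v := by
      have h := ha.actinv1 c0 v hv (by rw [hc01, hxv])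
      rw [hc03] at h
      exact h
    have hc0N : c0 ∈ FΛ.G.normalizerAt (FΛ.i x) H := by
      refine ⟨hc01, hc02', Set.Subset.antisymm ?_ ?_⟩
      · rintro _ ⟨a, haH, rfl⟩
        dsimp only
        obtain ⟨ha1', ha2', ha3'⟩ := hH1 a haH
        have hg1 : FΛ.G.src c0 = FΛ.G.rng a := by rw [hc01, ha2']
        have hg2 : FΛ.G.src (FΛ.G.comp c0 a) = FΛ.G.rng (FΛ.G.inv c0) := by
          rw [FΛ.G.src_comp _ _ hg1, ha1', FΛ.G.rng_inv, hc01]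
        refine hstab2 _ ?_ ?_ ?_
        · rw [FΛ.G.src_comp _ _ hg2, FΛ.G.src_inv, hc02']
        · rw [FΛ.G.rng_comp _ _ hg2, FΛ.G.rng_comp _ _ hg1, hc02']
        · rw [ha.actcomp _ _ (φ v) hφv (by rw [FΛ.G.src_inv, hc02', hφx]) hg2,
            hinv0, ha.actcomp c0 a v hv (by rw [ha1', hxv]) hg1, ha3', hc03]
      · intro a haH
        obtain ⟨ha1', ha2', ha3'⟩ := hH1 a haH
        have hstab1a := hstab1 a haH
        have hg1 : FΛ.G.src (FΛ.G.inv c0) = FΛ.G.rng a := by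
          rw [FΛ.G.src_inv, hc02', ha2']
        have hg2 : FΛ.G.src (FΛ.G.comp (FΛ.G.inv c0) a) = FΛ.G.rng c0 := by
          rw [FΛ.G.src_comp _ _ hg1, ha1', hc02']
        refine ⟨FΛ.G.comp (FΛ.G.comp (FΛ.G.inv c0) a) c0, ?_, ?_⟩
        · refine hH2 _ ?_ ?_ ?_
          · rw [FΛ.G.src_comp _ _ hg2, hc01]
          · rw [FΛ.G.rng_comp _ _ hg2, FΛ.G.rng_comp _ _ hg1, FΛ.G.rng_inv, hc01]
          · rw [ha.actcomp _ c0 v hv (by rw [hc01, hxv]) hg2, hc03,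
              ha.actcomp _ a (φ v) hφv (by rw [ha1', hφx]) hg1, hstab1a, hinv0]
        · dsimp only
          rw [← FΛ.G.assoc c0 (FΛ.G.comp (FΛ.G.inv c0) a) c0
            (by rw [hc01, FΛ.G.rng_comp _ _ hg1, FΛ.G.rng_inv, hc01])
            (by rw [FΛ.G.src_comp _ _ hg1, ha1', hc02'])]
          rw [FΛ.G.cancel_left' (by rw [hc02', ha2'])]
          exact FΛ.G.cancel_right (by rw [ha1', hc02'])
    have hc0N' := FΛ.G.normalizer_inv hH1' hc0N
    refine ⟨FΛ.G.inv c0, hc0N', ?_⟩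
    funext a
    have hFcφ : ∀ u, Ω.IsVertex u →
        Fc htr (FΛ.G.inv (FΛ.G.inv c0)) u = φ u := by
      intro u hu
      rw [FΛ.G.inv_inv]
      unfold Fc
      rw [dif_pos hu]
      set d := (htr u hu).choose with hdd
      obtain ⟨hd1, hd2, hd3⟩ := (htr u hu).choose_spec
      rw [← hdd] at hd1 hd2 hd3
      rw [ha.actcomp d c0 v hv (by rw [hc01, hxv]) (by rw [hd1, hc02']), hc03]
      have h := hEq d v hv (by rw [hd1, hxv])
      rw [hd3] at h
      exact h.symm
    have hsp := Theta_spec hp ha hv hpv htr hc0N'.1 hc0N'.2.1 a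
    apply hp.src_inj
    · rw [hsp.1, hFcφ (Ω.src a) (Ω.src_src a), hφhom.1]
    · rw [hsp.2, hφp]
  · -- multiplicativity
    intro c hc c' hc'
    exact Theta_mul hp ha hv hpv htr hH1 hH2 hc hc'
  · -- kernel
    intro c hc c' hc'
    have hci := FΛ.G.normalizer_inv hH1' hc
    have hci' := FΛ.G.normalizer_inv hH1' hc'
    constructor
    · intro hth
      have h1 := Theta_vtx hp ha hv hpv htr hc.1 hc.2.1 hv
      have h2 := Theta_vtx hp ha hv hpv htr hc'.1 hc'.2.1 hv
      have h3 := Fc_v ha hx hv hpv htr hH1 hH2 hci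
      have h4 := Fc_v ha hx hv hpv htr hH1 hH2 hci'
      have hvv : act (FΛ.G.inv c) v = act (FΛ.G.inv c') v := by
        rw [← h3, ← h4, ← h1, ← h2, hth]
      have hg0 : FΛ.G.src c' = FΛ.G.rng (FΛ.G.inv c) := by
        rw [hc'.1, FΛ.G.rng_inv, hc.1]
      have h01 : FΛ.G.src (FΛ.G.comp c' (FΛ.G.inv c)) = FΛ.i x := by
        rw [FΛ.G.src_comp _ _ hg0, FΛ.G.src_inv, hc.2.1]
      have h02 : FΛ.G.rng (FΛ.G.comp c' (FΛ.G.inv c)) = FΛ.i x := by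
        rw [FΛ.G.rng_comp _ _ hg0, hc'.2.1]
      have h03 : act (FΛ.G.comp c' (FΛ.G.inv c)) v = v := by
        rw [ha.actcomp _ _ v hv (by rw [FΛ.G.src_inv, hc.2.1, hxv]) hg0, hvv]
        exact ha.actinv2 c' v hv (by rw [hc'.2.1, hxv])
      have h0H := hH2 _ h01 h02 h03
      have hkey := FΛ.G.conj_inv_mem hH1' hc h0H
      have hid : FΛ.G.comp (FΛ.G.comp (FΛ.G.inv c) (FΛ.G.comp c' (FΛ.G.inv c)))
          (FΛ.G.inv (FΛ.G.inv c)) = FΛ.G.comp (FΛ.G.inv c) c' := by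
        rw [FΛ.G.inv_inv, ← FΛ.G.assoc (FΛ.G.inv c) c' (FΛ.G.inv c)
          (by rw [FΛ.G.src_inv, hc.2.1, hc'.2.1]) hg0]
        exact FΛ.G.cancel_right' (by rw [FΛ.G.src_comp _ _
          (by rw [FΛ.G.src_inv, hc.2.1, hc'.2.1]), hc'.1, hc.1])
      rw [← hid]
      exact hkey
    · intro hin
      obtain ⟨h01, h02, h03⟩ := hH1 _ hin
      have hFcc : ∀ u, Ω.IsVertex u →
          Fc htr (FΛ.G.inv c') u = Fc htr (FΛ.G.inv c) u := by
        intro u hu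
        have hc'e : FΛ.G.comp c (FΛ.G.comp (FΛ.G.inv c) c') = c' :=
          FΛ.G.cancel_left' (by rw [hc.2.1, hc'.2.1])
        have hinv0H : FΛ.G.inv (FΛ.G.comp (FΛ.G.inv c) c') ∈ H := by
          refine hH2 _ (by rw [FΛ.G.src_inv, h02]) (by rw [FΛ.G.rng_inv, h01]) ?_
          have h := ha.actinv1 (FΛ.G.comp (FΛ.G.inv c) c') v hv (by rw [h01, hxv])
          rw [h03] at h
          exact h
        have hkH := FΛ.G.conj_mem hc hinv0H
        obtain ⟨hk1, hk2, hk3⟩ := hH1 _ hkH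
        have hgk : FΛ.G.src c = FΛ.G.rng (FΛ.G.inv (FΛ.G.comp (FΛ.G.inv c) c')) := by
          rw [FΛ.G.rng_inv, h01, hc.1]
        have hidc : FΛ.G.inv c' = FΛ.G.comp (FΛ.G.inv c)
            (FΛ.G.comp (FΛ.G.comp c (FΛ.G.inv (FΛ.G.comp (FΛ.G.inv c) c')))
              (FΛ.G.inv c)) := by
          conv_lhs => rw [← hc'e]
          rw [FΛ.G.inv_comp (by rw [hc.1, h02])]
          rw [← FΛ.G.assoc (FΛ.G.inv c) (FΛ.G.comp c
              (FΛ.G.inv (FΛ.G.comp (FΛ.G.inv c) c'))) (FΛ.G.inv c)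
            (by rw [FΛ.G.src_inv, FΛ.G.rng_comp _ _ hgk])
            (by rw [FΛ.G.src_comp _ _ hgk, FΛ.G.src_inv, h02, FΛ.G.rng_inv, hc.1])]
          rw [FΛ.G.cancel_left hgk]
        rw [hidc]
        unfold Fc
        rw [dif_pos hu, dif_pos hu]
        set d := (htr u hu).choose with hdd
        obtain ⟨hd1, hd2, hd3⟩ := (htr u hu).choose_spec
        rw [← hdd] at hd1 hd2 hd3
        have hrk : FΛ.G.rng (FΛ.G.comp (FΛ.G.comp c
            (FΛ.G.inv (FΛ.G.comp (FΛ.G.inv c) c'))) (FΛ.G.inv c)) = FΛ.i x := by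
          rw [FΛ.G.rng_comp _ _ (by rw [FΛ.G.src_comp _ _ hgk, FΛ.G.src_inv, h02,
            FΛ.G.rng_inv, hc.1]), FΛ.G.rng_comp _ _ hgk, hc.2.1]
        have hsk : FΛ.G.src (FΛ.G.comp (FΛ.G.comp c
            (FΛ.G.inv (FΛ.G.comp (FΛ.G.inv c) c'))) (FΛ.G.inv c)) = FΛ.i x := by
          rw [FΛ.G.src_comp _ _ (by rw [FΛ.G.src_comp _ _ hgk, FΛ.G.src_inv, h02,
            FΛ.G.rng_inv, hc.1]), FΛ.G.src_inv, hc.2.1]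
        rw [← FΛ.G.assoc d (FΛ.G.inv c) _
          (by rw [hd1, FΛ.G.rng_inv, hc.1]) (by rw [FΛ.G.src_inv, hc.2.1, hrk])]
        rw [ha.actcomp _ _ v hv (by rw [hsk, hxv])
          (by rw [FΛ.G.src_comp _ _ (by rw [hd1, FΛ.G.rng_inv, hc.1]),
            FΛ.G.src_inv, hc.2.1, hrk]), hk3]
      funext a
      have hspc := Theta_spec hp ha hv hpv htr hc.1 hc.2.1 a
      have hspc' := Theta_spec hp ha hv hpv htr hc'.1 hc'.2.1 a
      apply hp.src_inj
      · rw [hspc.1, hspc'.1, hFcc (Ω.src a) (Ω.src_src a)]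
      · rw [hspc.2, hspc'.2]

end DeckMain

/-- For a connected covering `p : Ω → Λ`, `x ∈ Λ⁰` and
`v ∈ p⁻¹(x)`, the automorphism group `Aut(Ω,p)` is isomorphic as a group to
`N(p₊π(Ω,v)) / p₊π(Ω,v)`, the quotient of the normalizer of `p₊π(Ω,v)` in
`π(Λ,x)`.  The isomorphism is packaged as a map `Θ` from the normalizer onto
the covering automorphisms which is multiplicative and identifies `c, c'`
exactly when `c⁻¹ c' ∈ p₊π(Ω,v)`. -/
theorem aut_iso_normalizer_quotient {k : ℕ} {A A' : Type}
    (Λ : KGraphStruct k A) (Ω : KGraphStruct k A')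
    (FΛ : FundamentalGroupoid Λ) (FΩ : FundamentalGroupoid Ω)
    (p : A' → A) (hp : IsCovering Ω Λ p) (hconn : Ω.Connected)
    (pst : FΩ.B → FΛ.B) (hpst : IsGpdHomFun FΩ.G FΛ.G pst)
    (hpsti : ∀ a, pst (FΩ.i a) = FΛ.i (p a))
    (x : A) (hx : Λ.IsVertex x) (v : A') (hv : Ω.IsVertex v) (hpv : p v = x) :
    ∃ Θ : FΛ.B → (A' → A'),
      (∀ c ∈ FΛ.G.normalizerAt (FΛ.i x) (pst '' FΩ.pi1 v),
        IsCoveringAut Ω Λ p (Θ c)) ∧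
      (∀ φ, IsCoveringAut Ω Λ p φ →
        ∃ c ∈ FΛ.G.normalizerAt (FΛ.i x) (pst '' FΩ.pi1 v), Θ c = φ) ∧
      (∀ c ∈ FΛ.G.normalizerAt (FΛ.i x) (pst '' FΩ.pi1 v),
        ∀ c' ∈ FΛ.G.normalizerAt (FΛ.i x) (pst '' FΩ.pi1 v),
          Θ (FΛ.G.comp c c') = Θ c ∘ Θ c') ∧
      (∀ c ∈ FΛ.G.normalizerAt (FΛ.i x) (pst '' FΩ.pi1 v),
        ∀ c' ∈ FΛ.G.normalizerAt (FΛ.i x) (pst '' FΩ.pi1 v),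
          (Θ c = Θ c' ↔ FΛ.G.comp (FΛ.G.inv c) c' ∈ pst '' FΩ.pi1 v)) := by
  classical
  obtain ⟨Ξ, ⟨hΞhom, hΞi⟩, -⟩ := FΛ.univ (permGpd Ω p) (kP hp) (kP_functor hp)
  set act : FΛ.B → A' → A' := fun c => (Ξ c).σ with hact
  -- identification of the endpoints of `Ξ c`
  have hy : ∀ c, Λ.IsVertex (Ξ c).y ∧ FΛ.i ((Ξ c).y) = FΛ.G.src c := by
    intro c
    obtain ⟨w, ⟨hw1, hw2⟩, -⟩ := FΛ.obj_bij (FΛ.G.src c) (FΛ.G.src_src c)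
    have e := hΞhom.1 c
    rw [← hw2] at e
    rw [hΞi w] at e
    have ey : (kP hp w).y = (pVert Ω p (Ξ c).y).y := congrArg PArrow.y e
    have ey2 : Λ.src w = (Ξ c).y := ey
    rw [show Λ.src w = w from hw1] at ey2
    rw [← ey2]
    exact ⟨hw1, hw2⟩
  have hz : ∀ c, Λ.IsVertex (Ξ c).z ∧ FΛ.i ((Ξ c).z) = FΛ.G.rng c := by
    intro c
    obtain ⟨w, ⟨hw1, hw2⟩, -⟩ := FΛ.obj_bij (FΛ.G.rng c) (FΛ.G.src_rng c)
    have e := hΞhom.2.1 c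
    rw [← hw2] at e
    rw [hΞi w] at e
    have ey : (kP hp w).y = (pVert Ω p (Ξ c).z).y := congrArg PArrow.y e
    have ey2 : Λ.src w = (Ξ c).z := ey
    rw [show Λ.src w = w from hw1] at ey2
    rw [← ey2]
    exact ⟨hw1, hw2⟩
  -- the fiber condition translated
  have hyu : ∀ c u, Ω.IsVertex u → FΛ.G.src c = FΛ.i (p u) → p u = (Ξ c).y := by
    intro c u hu hc
    refine i_inj FΛ (cov_vertex_p hp hu) (hy c).1 ?_
    rw [(hy c).2, hc]
  have hvert : ∀ c u, Ω.IsVertex u → FΛ.G.src c = FΛ.i (p u) →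
      Ω.IsVertex (act c u) := by
    intro c u hu hc
    exact ((Ξ c).hσ u hu (hyu c u hu hc)).1
  have hfib : ∀ c u, Ω.IsVertex u → FΛ.G.src c = FΛ.i (p u) →
      FΛ.i (p (act c u)) = FΛ.G.rng c := by
    intro c u hu hc
    rw [((Ξ c).hσ u hu (hyu c u hu hc)).2.1]
    exact (hz c).2
  have hcov : ∀ a : A', act (FΛ.i (p a)) (Ω.src a) = Ω.rng a := by
    intro a
    have hcond : Ω.IsVertex (Ω.src a) ∧ p (Ω.src a) = Λ.src (p a) :=
      ⟨Ω.src_src a, hp.hom.1 a⟩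
    show (Ξ (FΛ.i (p a))).σ (Ω.src a) = Ω.rng a
    rw [hΞi (p a)]
    show (if h : Ω.IsVertex (Ω.src a) ∧ p (Ω.src a) = Λ.src (p a) then
      Ω.rng (liftS hp (p a) (Ω.src a) h) else Ω.src a) = Ω.rng a
    rw [dif_pos hcond, ← liftS_unique hp hcond rfl rfl]
  have hid : ∀ u, Ω.IsVertex u → act (FΛ.i (p u)) u = u := by
    intro u hu
    have h := hcov u
    rw [show Ω.src u = u from hu, Ω.vRng hu] at h
    exact h
  have hacomp : ∀ c c' u, Ω.IsVertex u → FΛ.G.src c' = FΛ.i (p u) →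
      FΛ.G.src c = FΛ.G.rng c' → act (FΛ.G.comp c c') u = act c (act c' u) := by
    intro c c' u hu hc' hg
    have hyz : (Ξ c).y = (Ξ c').z :=
      i_inj FΛ (hy c).1 (hz c').1 (by rw [(hy c).2, (hz c').2, hg])
    have hcc := hΞhom.2.2 c c' hg
    show (Ξ (FΛ.G.comp c c')).σ u = (Ξ c).σ ((Ξ c').σ u)
    rw [hcc]
    show ((permGpd Ω p).comp (Ξ c) (Ξ c')).σ u = _
    dsimp only [permGpd]
    rw [dif_pos hyz]
    exact if_pos ⟨hu, hyu c' u hu hc'⟩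
  have ha : ActFacts Ω FΛ p act := ⟨hvert, hfib, hid, hacomp, hcov⟩
  have hjf := act_jfact hp ha hpst hpsti
  have hH1 : ∀ a ∈ pst '' FΩ.pi1 v,
      FΛ.G.src a = FΛ.i x ∧ FΛ.G.rng a = FΛ.i x ∧ act a v = v := by
    rintro _ ⟨b, ⟨hb1, hb2⟩, rfl⟩
    have hsp : FΛ.G.src (pst b) = FΛ.i (p v) := by
      rw [← hpst.1, hb1, hpsti]
    refine ⟨by rw [hsp, hpv], by rw [← hpst.2.1, hb2, hpsti, hpv], ?_⟩
    have h := hjf b v hv hb1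
    rw [hb2] at h
    exact (i_inj FΩ hv (hvert _ _ hv hsp) h).symm
  have hH2 : ∀ a, FΛ.G.src a = FΛ.i x → FΛ.G.rng a = FΛ.i x → act a v = v →
      a ∈ pst '' FΩ.pi1 v := by
    intro a h1 h2 h3
    obtain ⟨b, hb1, hb2⟩ := star_surj hp ha hpst hpsti a v hv (by rw [h1, hpv])
    have hr := hjf b v hv hb1
    rw [hb2, h3] at hr
    exact ⟨b, ⟨hb1, hr⟩, hb2⟩
  have htr : ∀ u, Ω.IsVertex u → ∃ c, FΛ.G.src c = FΛ.i x ∧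
      FΛ.G.rng c = FΛ.i (p u) ∧ act c v = u := by
    intro u hu
    obtain ⟨c, hc1, hc2, hc3⟩ := act_trans hp ha hconn u v hu hv
    exact ⟨c, by rw [← hpv]; exact hc1, hc2, hc3⟩
  exact deck_main hp ha hx hv hpv htr hH1 hH2

end KGraphCovering
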